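/- arXiv:1612.03689 — 4 statements merged into one kernel-verified Lean document; each statement's English description precedes it below -/
import Mathlib

section
/- Let μ and ν be probability measures on ℝ with densities ρ_μ, ρ_ν positive and continuous on open intervals (a_μ,b_μ) and (a_ν,b_ν) respectively, vanishing outside. Then the monotone transport map T = F_ν⁻¹ ∘ F_μ is well defined and differentiable on (a_μ,b_μ) with derivative T' = ρ_μ / (ρ_ν ∘ F_ν⁻¹ ∘ F_μ), and its Lipschitz norm equals sup over (0,1) of (ρ_μ ∘ F_μ⁻¹) / (ρ_ν ∘ F_ν⁻¹). -/
open MeasureTheory Real Set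

/-- Variance of `f` under `μ`, as `inf_a ∫ (f-a)^2 dμ`. -/
noncomputable def Var (μ : Measure ℝ) (f : ℝ → ℝ) : ℝ := ⨅ a : ℝ, ∫ x, (f x - a)^2 ∂μ

/-- `μ` satisfies a Poincaré inequality with constant `C`, over test functions that are
differentiable on the supporting interval `s` with `f, f' ∈ L²(μ)`. -/
def PoincareOn (μ : Measure ℝ) (s : Set ℝ) (C : ℝ) : Prop :=
  ∀ f f' : ℝ → ℝ, (∀ x ∈ s, HasDerivAt f (f' x) x) →
    Integrable (fun x => (f x)^2) μ → Integrable (fun x => (f' x)^2) μ →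
    Var μ f ≤ C * ∫ x, (f' x)^2 ∂μ

/-- The optimal Poincaré constant of `μ` on the interval `s`. -/
noncomputable def CP (μ : Measure ℝ) (s : Set ℝ) : ℝ := sInf {C | 0 ≤ C ∧ PoincareOn μ s C}

section auxlemmas

variable {S : Set ℝ} {ρ F : ℝ → ℝ}

lemma aux_nonneg (hpos : ∀ x ∈ S, 0 < ρ x) (h0 : ∀ x ∉ S, ρ x = 0) : ∀ x, 0 ≤ ρ x := by
  intro x
  by_cases hx : x ∈ S
  · exact (hpos x hx).le
  · exact (h0 x hx).ge

lemma aux_integrable (hprob : ∫ t, ρ t = 1) : Integrable ρ := by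
  by_contra h
  rw [integral_undef h] at hprob
  norm_num at hprob

lemma aux_mono (hρ : Integrable ρ) (hnn : ∀ x, 0 ≤ ρ x)
    (hF : ∀ x, F x = ∫ t in Set.Iic x, ρ t) : Monotone F := by
  intro a b hab
  rw [hF a, hF b]
  exact setIntegral_mono_set hρ.integrableOn (Filter.Eventually.of_forall hnn)
    (HasSubset.Subset.eventuallyLE (Iic_subset_Iic.2 hab))

lemma aux_hasDeriv (hSo : IsOpen S) (hc : ContinuousOn ρ S) (hρ : Integrable ρ)
    (hF : ∀ x, F x = ∫ t in Set.Iic x, ρ t) :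
    ∀ x ∈ S, HasDerivAt F (ρ x) x := by
  intro x hx
  have key : F = fun y => F 0 + ∫ t in (0:ℝ)..y, ρ t := by
    funext y
    rw [hF y, hF 0, ← intervalIntegral.integral_Iic_sub_Iic hρ.integrableOn hρ.integrableOn]
    ring
  rw [key]
  exact (intervalIntegral.integral_hasDerivAt_right hρ.intervalIntegrable
    (hc.stronglyMeasurableAtFilter hSo x hx)
    (hc.continuousAt (hSo.mem_nhds hx))).const_add (F 0)

lemma aux_mem_Ioo (hSo : IsOpen S) (hc : ContinuousOn ρ S) (hpos : ∀ x ∈ S, 0 < ρ x)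
    (h0 : ∀ x ∉ S, ρ x = 0) (hprob : ∫ t, ρ t = 1)
    (hF : ∀ x, F x = ∫ t in Set.Iic x, ρ t) :
    ∀ x ∈ S, F x ∈ Set.Ioo (0:ℝ) 1 := by
  intro x hx
  have hnn := aux_nonneg hpos h0
  have hρ := aux_integrable hprob
  obtain ⟨ε, hε, hball⟩ := Metric.isOpen_iff.1 hSo x hx
  have hsub : Set.Ioo (x - ε) (x + ε) ⊆ S := by
    intro y hy; apply hball
    rw [Metric.mem_ball, Real.dist_eq, abs_lt]
    exact ⟨by linarith [hy.1], by linarith [hy.2]⟩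
  have hlt1 : ∀ a b : ℝ, a < b → Set.Ioo a b ⊆ S → 0 < ∫ t in a..b, ρ t := by
    intro a b hab hsub'
    exact intervalIntegral.intervalIntegral_pos_of_pos_on hρ.intervalIntegrable
      (fun t ht => hpos t (hsub' ht)) hab
  have h1 : 0 < ∫ t in (x-ε)..x, ρ t :=
    hlt1 _ _ (by linarith) (fun t ht => hsub ⟨ht.1, by linarith [ht.2]⟩)
  have h2 : 0 < ∫ t in x..(x+ε), ρ t :=
    hlt1 _ _ (by linarith) (fun t ht => hsub ⟨by linarith [ht.1], ht.2⟩)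
  have hFle : ∀ y, F y ≤ 1 := by
    intro y
    rw [hF y, ← hprob]
    exact setIntegral_le_integral hρ (Filter.Eventually.of_forall hnn)
  have hdiff : ∀ a b : ℝ, F b - F a = ∫ t in a..b, ρ t := by
    intro a b; rw [hF a, hF b]
    exact intervalIntegral.integral_Iic_sub_Iic hρ.integrableOn hρ.integrableOn
  have hF0 : 0 ≤ F (x - ε) := by
    rw [hF]
    exact setIntegral_nonneg measurableSet_Iic (fun t _ => hnn t)
  constructor
  · have := hdiff (x-ε) x; linarith
  · have := hdiff x (x+ε); have := hFle (x+ε); linarith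

lemma aux_strictMonoOn (hSo : IsOpen S) (hSc : S.OrdConnected)
    (hder : ∀ x ∈ S, HasDerivAt F (ρ x) x) (hpos : ∀ x ∈ S, 0 < ρ x) :
    StrictMonoOn F S := by
  apply strictMonoOn_of_deriv_pos (convex_iff_ordConnected.2 hSc)
  · exact fun x hx => ((hder x hx).differentiableAt).continuousAt.continuousWithinAt
  · intro x hx
    rw [hSo.interior_eq] at hx
    rw [(hder x hx).deriv]
    exact hpos x hx

lemma aux_inv_deriv {G : ℝ → ℝ} (hSo : IsOpen S) (hSc : S.OrdConnected)
    (hc : ContinuousOn ρ S) (hpos : ∀ x ∈ S, 0 < ρ x) (h0 : ∀ x ∉ S, ρ x = 0)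
    (hprob : ∫ t, ρ t = 1) (hF : ∀ x, F x = ∫ t in Set.Iic x, ρ t)
    (hG : ∀ u ∈ Set.Ioo (0:ℝ) 1, G u ∈ S ∧ F (G u) = u) :
    ∀ u ∈ Set.Ioo (0:ℝ) 1, HasDerivAt G (ρ (G u))⁻¹ u := by
  intro u hu
  have hρ := aux_integrable hprob
  have hnn := aux_nonneg hpos h0
  have hmono := aux_mono hρ hnn hF
  have hder := aux_hasDeriv hSo hc hρ hF
  have hsm := aux_strictMonoOn hSo hSc hder hpos
  obtain ⟨hGu, hFGu⟩ := hG u hu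
  set v := G u with hv
  have hcont : ContinuousAt G u := by
    rw [Metric.continuousAt_iff]
    intro ε hε
    obtain ⟨ε', hε', hball⟩ := Metric.isOpen_iff.1 hSo v hGu
    set δ' := min (ε/2) (ε'/2) with hδ'
    have hδ'pos : 0 < δ' := lt_min (by linarith) (by linarith)
    have hmem : ∀ w : ℝ, |w - v| < ε' → w ∈ S := by
      intro w hw; apply hball; rwa [Metric.mem_ball, Real.dist_eq]
    have hmem1 : v - δ' ∈ S := hmem _ (by
      rw [abs_lt]; constructor <;> simp only [hδ'] <;>
        [linarith [min_le_right (ε/2) (ε'/2)]; linarith [min_le_right (ε/2) (ε'/2)]])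
    have hmem2 : v + δ' ∈ S := hmem _ (by
      rw [abs_lt]; constructor <;> simp only [hδ'] <;>
        [linarith [min_le_right (ε/2) (ε'/2)]; linarith [min_le_right (ε/2) (ε'/2)]])
    have hlt1 : F (v - δ') < u := hFGu ▸ hsm hmem1 hGu (by linarith)
    have hlt2 : u < F (v + δ') := hFGu ▸ hsm hGu hmem2 (by linarith)
    refine ⟨min (u - F (v - δ')) (F (v + δ') - u), lt_min (by linarith) (by linarith), ?_⟩
    intro y hy
    rw [Real.dist_eq] at hy
    have habs := abs_lt.1 hy
    have hmin1 := min_le_left (u - F (v - δ')) (F (v + δ') - u)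
    have hmin2 := min_le_right (u - F (v - δ')) (F (v + δ') - u)
    have hy1 : F (v - δ') < y := by linarith [habs.1]
    have hy2 : y < F (v + δ') := by linarith [habs.2]
    have hyI : y ∈ Set.Ioo (0:ℝ) 1 :=
      ⟨lt_trans (aux_mem_Ioo hSo hc hpos h0 hprob hF _ hmem1).1 hy1,
       lt_of_lt_of_le hy2 (le_of_lt (aux_mem_Ioo hSo hc hpos h0 hprob hF _ hmem2).2)⟩
    obtain ⟨hGy, hFGy⟩ := hG y hyI
    have hg1 : v - δ' < G y := by
      by_contra h; push_neg at h
      have := hmono h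
      rw [hFGy] at this; linarith
    have hg2 : G y < v + δ' := by
      by_contra h; push_neg at h
      have := hmono h
      rw [hFGy] at this; linarith
    rw [Real.dist_eq, abs_lt]
    have hδ'ε : δ' ≤ ε/2 := min_le_left _ _
    exact ⟨by linarith, by linarith⟩
  have heq : ∀ᶠ y in nhds u, F (G y) = y := by
    filter_upwards [isOpen_Ioo.mem_nhds hu] with y hy using (hG y hy).2
  have := HasDerivAt.of_local_left_inverse hcont (hder v hGu) (ne_of_gt (hpos v hGu)) heq
  exact this

end auxlemmas

/-- the monotone transport map, its derivative and its Lipschitz norm. -/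
theorem stmt2 (Sμ Sν : Set ℝ)
    (hSμo : IsOpen Sμ) (hSμc : Sμ.OrdConnected) (hSμne : Sμ.Nonempty)
    (hSνo : IsOpen Sν) (hSνc : Sν.OrdConnected) (hSνne : Sν.Nonempty)
    (ρμ ρν : ℝ → ℝ)
    (hcμ : ContinuousOn ρμ Sμ) (hposμ : ∀ x ∈ Sμ, 0 < ρμ x) (h0μ : ∀ x ∉ Sμ, ρμ x = 0)
    (hcν : ContinuousOn ρν Sν) (hposν : ∀ x ∈ Sν, 0 < ρν x) (h0ν : ∀ x ∉ Sν, ρν x = 0)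
    (hprobμ : ∫ t, ρμ t = 1) (hprobν : ∫ t, ρν t = 1)
    (Fμ Fν : ℝ → ℝ)
    (hFμ : ∀ x, Fμ x = ∫ t in Set.Iic x, ρμ t)
    (hFν : ∀ x, Fν x = ∫ t in Set.Iic x, ρν t)
    -- `G` is the inverse of `Fν`, `H` the inverse of `Fμ`, on `(0,1)`
    (G H : ℝ → ℝ)
    (hG : ∀ u ∈ Set.Ioo (0:ℝ) 1, G u ∈ Sν ∧ Fν (G u) = u)
    (hH : ∀ u ∈ Set.Ioo (0:ℝ) 1, H u ∈ Sμ ∧ Fμ (H u) = u)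
    (T : ℝ → ℝ) (hT : ∀ x, T x = G (Fμ x)) :
    (∀ x ∈ Sμ, HasDerivAt T (ρμ x / ρν (T x)) x) ∧
    sInf {L : ℝ | 0 ≤ L ∧ ∀ x ∈ Sμ, ∀ y ∈ Sμ, |T x - T y| ≤ L * |x - y|}
      = sSup ((fun u => ρμ (H u) / ρν (G u)) '' Set.Ioo (0:ℝ) 1) := by
  have hρμ := aux_integrable hprobμ
  have hFμIoo := aux_mem_Ioo hSμo hcμ hposμ h0μ hprobμ hFμ
  have hFμder := aux_hasDeriv hSμo hcμ hρμ hFμ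
  have hFμsm := aux_strictMonoOn hSμo hSμc hFμder hposμ
  have hGder := aux_inv_deriv hSνo hSνc hcν hposν h0ν hprobν hFν hG
  -- part 1
  have hTin : ∀ x ∈ Sμ, T x ∈ Sν := fun x hx => by
    rw [hT x]; exact (hG _ (hFμIoo x hx)).1
  have hTder : ∀ x ∈ Sμ, HasDerivAt T (ρμ x / ρν (T x)) x := by
    intro x hx
    have hu := hFμIoo x hx
    have hcomp := (hGder (Fμ x) hu).comp x (hFμder x hx)
    have hTeq : T = fun y => G (Fμ y) := funext hT
    rw [hTeq]
    have : ρμ x / ρν ((fun y => G (Fμ y)) x) = (ρν (G (Fμ x)))⁻¹ * ρμ x := by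
      simp [div_eq_inv_mul]
    rw [this]
    exact hcomp
  refine ⟨hTder, ?_⟩
  -- part 2
  set D := (fun u => ρμ (H u) / ρν (G u)) '' Set.Ioo (0:ℝ) 1 with hD
  have hHFx : ∀ x ∈ Sμ, H (Fμ x) = x := by
    intro x hx
    have hu := hFμIoo x hx
    obtain ⟨hHm, hFH⟩ := hH (Fμ x) hu
    exact hFμsm.injOn hHm hx hFH
  have hDeq : D = (fun x => ρμ x / ρν (T x)) '' Sμ := by
    ext d
    constructor
    · rintro ⟨u, hu, rfl⟩
      exact ⟨H u, (hH u hu).1, by simp only; rw [hT, (hH u hu).2]⟩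
    · rintro ⟨x, hx, rfl⟩
      exact ⟨Fμ x, hFμIoo x hx, by simp only; rw [hHFx x hx, hT]⟩
  have hDpos : ∀ d ∈ D, 0 < d := by
    rw [hDeq]
    rintro d ⟨x, hx, rfl⟩
    exact div_pos (hposμ x hx) (hposν _ (hTin x hx))
  have hDne : D.Nonempty := by
    rw [hDeq]
    obtain ⟨x, hx⟩ := hSμne
    exact ⟨_, x, hx, rfl⟩
  have hub : {L : ℝ | 0 ≤ L ∧ ∀ x ∈ Sμ, ∀ y ∈ Sμ, |T x - T y| ≤ L * |x - y|}
      = upperBounds D := by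
    ext L
    constructor
    · rintro ⟨hL0, hLip⟩ d hd
      rw [hDeq] at hd
      obtain ⟨x, hx, rfl⟩ := hd
      have hder := hTder x hx
      have hsl := hasDerivAt_iff_tendsto_slope.1 hder
      have habs : Filter.Tendsto (fun y => |slope T x y|) (nhdsWithin x {x}ᶜ)
          (nhds |ρμ x / ρν (T x)|) := hsl.abs
      have hle : |ρμ x / ρν (T x)| ≤ L := by
        apply le_of_tendsto habs
        filter_upwards [self_mem_nhdsWithin,
          mem_nhdsWithin_of_mem_nhds (hSμo.mem_nhds hx)] with y hy hyS
        rw [slope_def_field, abs_div]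
        rw [div_le_iff₀ (abs_pos.2 (sub_ne_zero.2 hy))]
        have := hLip y hyS x hx
        calc |T y - T x| ≤ L * |y - x| := this
          _ = L * |y - x| := rfl
      exact le_trans (le_abs_self _) hle
    · intro hL
      obtain ⟨d0, hd0⟩ := hDne
      have hL0 : 0 ≤ L := le_trans (hDpos d0 hd0).le (hL hd0)
      refine ⟨hL0, ?_⟩
      intro x hx y hy
      have := Convex.norm_image_sub_le_of_norm_hasDerivWithin_le (f := T)
        (f' := fun z => ρμ z / ρν (T z))
        (fun z hz => (hTder z hz).hasDerivWithinAt)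
        (fun z hz => by
          rw [Real.norm_eq_abs, abs_of_pos (div_pos (hposμ z hz) (hposν _ (hTin z hz)))]
          exact hL (hDeq ▸ ⟨z, hz, rfl⟩))
        (convex_iff_ordConnected.2 hSμc) hy hx
      simpa [Real.norm_eq_abs] using this
  rw [hub]
  by_cases hbdd : BddAbove D
  · rw [(isLUB_csSup hDne hbdd).upperBounds_eq, csInf_Ici]
  · have hempty : upperBounds D = ∅ := not_nonempty_iff_eq_empty.1 hbdd
    rw [hempty, Real.sInf_empty, Real.sSup_of_not_bddAbove hbdd]
end

section
/- Let μ be an even probability measure on ℝ supported on a symmetric interval, absolutely continuous with positive continuous density in the interior of its support. Then for any non-constant function f ∈ H¹(μ), there exists an odd function g ∈ H¹(μ) with ∫(f')² dμ / Var_μ(f) ≥ ∫(g')² dμ / Var_μ(g). -/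
open MeasureTheory Real Set

/- ### Auxiliary lemmas -/

lemma expand_sq (μ : Measure ℝ) [IsProbabilityMeasure μ] (f : ℝ → ℝ)
    (h1 : Integrable f μ) (h2 : Integrable (fun x => (f x)^2) μ) (a : ℝ) :
    ∫ x, (f x - a)^2 ∂μ = (∫ x, (f x)^2 ∂μ) - 2*a*(∫ x, f x ∂μ) + a^2 := by
  have i1 : Integrable (fun x => (f x)^2 - 2*a*(f x)) μ := h2.sub (h1.const_mul (2*a))
  have e : (fun x => (f x - a)^2) = fun x => ((f x)^2 - 2*a*(f x)) + a^2 := by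
    funext x; ring
  rw [e, integral_add i1 (integrable_const _),
    integral_sub h2 (h1.const_mul (2*a))]
  simp [MeasureTheory.integral_const_mul]

lemma var_formula (μ : Measure ℝ) [IsProbabilityMeasure μ] (f : ℝ → ℝ)
    (h1 : Integrable f μ) (h2 : Integrable (fun x => (f x)^2) μ) :
    Var μ f = ∫ x, (f x - ∫ y, f y ∂μ)^2 ∂μ := by
  set m := ∫ y, f y ∂μ with hm
  have key : ∀ a : ℝ, ∫ x, (f x - a)^2 ∂μ = (∫ x, (f x - m)^2 ∂μ) + (m - a)^2 := by
    intro a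
    rw [expand_sq μ f h1 h2 a, expand_sq μ f h1 h2 m, ← hm]; ring
  refine le_antisymm ?_ (le_ciInf fun a => by rw [key a]; nlinarith [sq_nonneg (m - a)])
  have hb : BddBelow (Set.range fun a => ∫ x, (f x - a)^2 ∂μ) := by
    refine ⟨∫ x, (f x - m)^2 ∂μ, ?_⟩
    rintro _ ⟨a, rfl⟩
    simp only []
    rw [key a]; nlinarith [sq_nonneg (m - a)]
  have := ciInf_le hb m
  rw [key m] at this
  simpa [Var] using this

lemma rho_meas (b : ℝ) (ρ : ℝ → ℝ)
    (hc : ContinuousOn ρ (Set.Ioo (-b) b))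
    (h0 : ∀ x ∉ Set.Ioo (-b) b, ρ x = 0) : Measurable ρ := by
  classical
  have : ρ = (Set.Ioo (-b) b).piecewise ρ (fun _ => 0) := by
    funext x
    by_cases hx : x ∈ Set.Ioo (-b) b <;> simp [Set.piecewise, hx, h0 x]
  rw [this]
  exact hc.measurable_piecewise continuousOn_const measurableSet_Ioo

lemma neg_mp (b : ℝ) (ρ : ℝ → ℝ) (μ : Measure ℝ)
    (hμ : μ = MeasureTheory.volume.withDensity fun t => ENNReal.ofReal (ρ t))
    (hc : ContinuousOn ρ (Set.Ioo (-b) b))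
    (h0 : ∀ x ∉ Set.Ioo (-b) b, ρ x = 0)
    (heven : ∀ x, ρ (-x) = ρ x) :
    MeasurePreserving (fun x : ℝ => -x) μ μ := by
  have hρm : Measurable ρ := rho_meas b ρ hc h0
  refine ⟨measurable_neg, ?_⟩
  subst hμ
  ext s hs
  rw [Measure.map_apply measurable_neg hs,
    withDensity_apply _ (measurable_neg hs), withDensity_apply _ hs]
  have : ∫⁻ x in s, ENNReal.ofReal (ρ x) ∂volume
      = ∫⁻ x in s, ENNReal.ofReal (ρ x) ∂(Measure.map (fun x : ℝ => -x) volume) := by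
    rw [Measure.map_neg_eq_self]
  rw [this, Measure.restrict_map measurable_neg hs,
    lintegral_map' (hρm.ennreal_ofReal.aemeasurable) measurable_neg.aemeasurable]
  simp [heven]

lemma null_compl (b : ℝ) (ρ : ℝ → ℝ) (μ : Measure ℝ)
    (hμ : μ = MeasureTheory.volume.withDensity fun t => ENNReal.ofReal (ρ t))
    (h0 : ∀ x ∉ Set.Ioo (-b) b, ρ x = 0) :
    ∀ᵐ x ∂μ, x ∈ Set.Ioo (-b) b := by
  rw [ae_iff, hμ]
  have hmeas : MeasurableSet {x : ℝ | ¬ x ∈ Set.Ioo (-b) b} := measurableSet_Ioo.compl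
  rw [withDensity_apply _ hmeas]
  rw [setLIntegral_congr_fun hmeas (fun x hx => by
    simp [h0 x hx] : Set.EqOn (fun x => ENNReal.ofReal (ρ x)) (fun _ => 0)
      {x : ℝ | ¬ x ∈ Set.Ioo (-b) b})]
  simp

lemma zero_on (b : ℝ) (ρ : ℝ → ℝ) (μ : Measure ℝ)
    (hμ : μ = MeasureTheory.volume.withDensity fun t => ENNReal.ofReal (ρ t))
    (hc : ContinuousOn ρ (Set.Ioo (-b) b)) (hpos : ∀ x ∈ Set.Ioo (-b) b, 0 < ρ x)
    (h0 : ∀ x ∉ Set.Ioo (-b) b, ρ x = 0)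
    (w : ℝ → ℝ) (hw : ContinuousOn w (Set.Ioo (-b) b))
    (hwz : ∀ᵐ x ∂μ, w x = 0) :
    ∀ x ∈ Set.Ioo (-b) b, w x = 0 := by
  intro x₀ hx₀
  by_contra hne
  set c : ℝ := ρ x₀ / 2 with hcdef
  have hcpos : 0 < c := by have := hpos x₀ hx₀; positivity
  set S : Set ℝ := (Set.Ioo (-b) b ∩ w ⁻¹' {0}ᶜ) ∩ (Set.Ioo (-b) b ∩ ρ ⁻¹' Set.Ioi c)
    with hSdef
  have hSopen : IsOpen S := by
    apply IsOpen.inter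
    · exact hw.isOpen_inter_preimage isOpen_Ioo isOpen_compl_singleton
    · exact hc.isOpen_inter_preimage isOpen_Ioo isOpen_Ioi
  have hx₀S : x₀ ∈ S := by
    refine ⟨⟨hx₀, hne⟩, hx₀, ?_⟩
    simp only [Set.mem_preimage, Set.mem_Ioi]
    have := hpos x₀ hx₀; linarith
  have hvol : 0 < volume S := hSopen.measure_pos volume ⟨x₀, hx₀S⟩
  have hSpos : 0 < μ S := by
    rw [hμ, withDensity_apply _ hSopen.measurableSet]
    have h1 : ENNReal.ofReal c * volume S ≤ ∫⁻ x in S, ENNReal.ofReal (ρ x) ∂volume := by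
      calc ENNReal.ofReal c * volume S = ∫⁻ _ in S, ENNReal.ofReal c ∂volume := by
            rw [setLIntegral_const]
        _ ≤ ∫⁻ x in S, ENNReal.ofReal (ρ x) ∂volume :=
            setLIntegral_mono (rho_meas b ρ hc h0).ennreal_ofReal
              (fun x hx => ENNReal.ofReal_le_ofReal (le_of_lt hx.2.2))
    refine lt_of_lt_of_le ?_ h1
    exact ENNReal.mul_pos (by simpa [ENNReal.ofReal_eq_zero] using hcpos) hvol.ne'
  have : μ S = 0 := by
    apply measure_mono_null _ (ae_iff.mp hwz)
    intro x hx
    exact hx.1.2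
  exact hSpos.ne' this

lemma aesm_div2 {μ : Measure ℝ} {u : ℝ → ℝ} (h : AEStronglyMeasurable u μ) :
    AEStronglyMeasurable (fun x => u x / 2) μ := by
  simpa [div_eq_mul_inv] using h.mul_const (2:ℝ)⁻¹

lemma int_mul (μ : Measure ℝ) [IsProbabilityMeasure μ] (u v : ℝ → ℝ)
    (hu : AEStronglyMeasurable u μ) (hv : AEStronglyMeasurable v μ)
    (hu2 : Integrable (fun x => (u x)^2) μ) (hv2 : Integrable (fun x => (v x)^2) μ) :
    Integrable (fun x => u x * v x) μ := by
  refine Integrable.mono' ((hu2.add hv2).div_const 2) (hu.mul hv) ?_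
  filter_upwards with x
  rw [Real.norm_eq_abs, abs_le]
  simp only [Pi.add_apply]
  constructor <;> nlinarith [sq_nonneg (u x - v x), sq_nonneg (u x + v x)]

lemma int_self (μ : Measure ℝ) [IsProbabilityMeasure μ] (u : ℝ → ℝ)
    (hu : AEStronglyMeasurable u μ)
    (hu2 : Integrable (fun x => (u x)^2) μ) :
    Integrable u μ := by
  refine Integrable.mono' ((hu2.add (integrable_const 1)).div_const 2) hu ?_
  filter_upwards with x
  rw [Real.norm_eq_abs, abs_le]
  simp only [Pi.add_apply]
  constructor <;> nlinarith [sq_nonneg (u x - 1), sq_nonneg (u x + 1)]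

set_option maxHeartbeats 2000000 in
/-- for an even measure on a symmetric interval, the Rayleigh quotient of any
non-constant `H¹` function is bounded below by that of some odd function. -/
theorem stmt6 (b : ℝ) (hb : 0 < b) (ρ : ℝ → ℝ) (μ : Measure ℝ) [IsProbabilityMeasure μ]
    (hμ : μ = MeasureTheory.volume.withDensity fun t => ENNReal.ofReal (ρ t))
    (heven : ∀ x, ρ (-x) = ρ x)
    (hc : ContinuousOn ρ (Set.Ioo (-b) b)) (hpos : ∀ x ∈ Set.Ioo (-b) b, 0 < ρ x)
    (h0 : ∀ x ∉ Set.Ioo (-b) b, ρ x = 0)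
    (f f' : ℝ → ℝ)
    (hf : ∀ x ∈ Set.Ioo (-b) b, HasDerivAt f (f' x) x)
    (hf2 : Integrable (fun x => (f x)^2) μ) (hf'2 : Integrable (fun x => (f' x)^2) μ)
    (hnc : ∃ x ∈ Set.Ioo (-b) b, ∃ y ∈ Set.Ioo (-b) b, f x ≠ f y) :
    ∃ g g' : ℝ → ℝ, (∀ x, g (-x) = - g x) ∧
      (∀ x ∈ Set.Ioo (-b) b, HasDerivAt g (g' x) x) ∧
      Integrable (fun x => (g x)^2) μ ∧ Integrable (fun x => (g' x)^2) μ ∧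
      Var μ g ≠ 0 ∧
      (∫ x, (g' x)^2 ∂μ) / Var μ g ≤ (∫ x, (f' x)^2 ∂μ) / Var μ f := by
  classical
  have hmp := neg_mp b ρ μ hμ hc h0 heven
  have hae : ∀ᵐ x ∂μ, x ∈ Set.Ioo (-b) b := null_compl b ρ μ hμ h0
  have hrestrict : μ.restrict (Set.Ioo (-b) b) = μ :=
    Measure.restrict_eq_self_of_ae_mem hae
  -- membership symmetry of the interval
  have hIneg : ∀ {x : ℝ}, x ∈ Set.Ioo (-b) b → -x ∈ Set.Ioo (-b) b := by
    rintro x ⟨h1, h2⟩; exact ⟨by linarith, by linarith⟩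
  -- basic measurability
  have hfc : ContinuousOn f (Set.Ioo (-b) b) :=
    fun x hx => ((hf x hx).continuousAt).continuousWithinAt
  have hfm : AEStronglyMeasurable f μ := by
    rw [← hrestrict]; exact hfc.aestronglyMeasurable measurableSet_Ioo
  have hf'm : AEStronglyMeasurable f' μ := by
    refine ((measurable_deriv f).aestronglyMeasurable).congr ?_
    filter_upwards [hae] with x hx
    exact (hf x hx).deriv
  -- negation machinery
  have hneg_aesm : ∀ {u : ℝ → ℝ}, AEStronglyMeasurable u μ →
      AEStronglyMeasurable (fun x => u (-x)) μ :=
    fun hu => hu.comp_measurePreserving hmp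
  have hneg_int : ∀ {u : ℝ → ℝ}, Integrable u μ → Integrable (fun x => u (-x)) μ :=
    fun {u} hu => (hmp.integrable_comp hu.aestronglyMeasurable).mpr hu
  have hint_neg : ∀ (u : ℝ → ℝ), ∫ x, u (-x) ∂μ = ∫ x, u x ∂μ := fun u =>
    hmp.integral_comp (MeasurableEquiv.neg ℝ).measurableEmbedding u
  have hodd_int : ∀ (u : ℝ → ℝ), (∀ x, u (-x) = - u x) → ∫ x, u x ∂μ = 0 := by
    intro u hu
    have h1 : ∫ x, u (-x) ∂μ = ∫ x, u x ∂μ := hint_neg u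
    have h2 : ∫ x, u (-x) ∂μ = - ∫ x, u x ∂μ := by
      simp_rw [hu]; exact integral_neg u
    linarith
  -- decomposition
  set g : ℝ → ℝ := fun x => (f x - f (-x))/2 with hgdef
  set g' : ℝ → ℝ := fun x => (f' x + f' (-x))/2 with hg'def
  set h : ℝ → ℝ := fun x => (f x + f (-x))/2 with hhdef
  set h' : ℝ → ℝ := fun x => (f' x - f' (-x))/2 with hh'def
  set m : ℝ := ∫ x, f x ∂μ with hmdef
  -- integrability of all squares and products
  have hf2n : Integrable (fun x => (f (-x))^2) μ := hneg_int hf2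
  have hf'2n : Integrable (fun x => (f' (-x))^2) μ := hneg_int hf'2
  have hcross : Integrable (fun x => f x * f (-x)) μ :=
    int_mul μ _ _ hfm (hneg_aesm hfm) hf2 hf2n
  have hcross' : Integrable (fun x => f' x * f' (-x)) μ :=
    int_mul μ _ _ hf'm (hneg_aesm hf'm) hf'2 hf'2n
  have hg2 : Integrable (fun x => (g x)^2) μ := by
    have e : (fun x => (g x)^2)
        = fun x => ((1/4)*(f x)^2 - (1/2)*(f x * f (-x))) + (1/4)*(f (-x))^2 := by
      funext x; simp only [hgdef]; ring
    rw [e]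
    exact ((hf2.const_mul _).sub (hcross.const_mul _)).add (hf2n.const_mul _)
  have hh2 : Integrable (fun x => (h x)^2) μ := by
    have e : (fun x => (h x)^2)
        = fun x => ((1/4)*(f x)^2 + (1/2)*(f x * f (-x))) + (1/4)*(f (-x))^2 := by
      funext x; simp only [hhdef]; ring
    rw [e]
    exact ((hf2.const_mul _).add (hcross.const_mul _)).add (hf2n.const_mul _)
  have hg'2 : Integrable (fun x => (g' x)^2) μ := by
    have e : (fun x => (g' x)^2)
        = fun x => ((1/4)*(f' x)^2 + (1/2)*(f' x * f' (-x))) + (1/4)*(f' (-x))^2 := by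
      funext x; simp only [hg'def]; ring
    rw [e]
    exact ((hf'2.const_mul _).add (hcross'.const_mul _)).add (hf'2n.const_mul _)
  have hh'2 : Integrable (fun x => (h' x)^2) μ := by
    have e : (fun x => (h' x)^2)
        = fun x => ((1/4)*(f' x)^2 - (1/2)*(f' x * f' (-x))) + (1/4)*(f' (-x))^2 := by
      funext x; simp only [hh'def]; ring
    rw [e]
    exact ((hf'2.const_mul _).sub (hcross'.const_mul _)).add (hf'2n.const_mul _)
  -- AESM of pieces
  have hgm : AEStronglyMeasurable g μ := aesm_div2 (hfm.sub (hneg_aesm hfm))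
  have hhm : AEStronglyMeasurable h μ := aesm_div2 (hfm.add (hneg_aesm hfm))
  have hg'm : AEStronglyMeasurable g' μ := aesm_div2 (hf'm.add (hneg_aesm hf'm))
  have hh'm : AEStronglyMeasurable h' μ := aesm_div2 (hf'm.sub (hneg_aesm hf'm))
  -- L¹ facts
  have hf1 : Integrable f μ := int_self μ f hfm hf2
  have hg1 : Integrable g μ := int_self μ g hgm hg2
  have hh1 : Integrable h μ := int_self μ h hhm hh2
  -- parity
  have hg_odd : ∀ x, g (-x) = - g x := by intro x; simp only [hgdef, neg_neg]; ring
  have hh_even : ∀ x, h (-x) = h x := by intro x; simp only [hhdef, neg_neg]; ring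
  have hg'_even : ∀ x, g' (-x) = g' x := by intro x; simp only [hg'def, neg_neg]; ring
  have hh'_odd : ∀ x, h' (-x) = - h' x := by intro x; simp only [hh'def, neg_neg]; ring
  -- derivatives
  have hfneg : ∀ x ∈ Set.Ioo (-b) b, HasDerivAt (fun y => f (-y)) (-(f' (-x))) x := by
    intro x hx
    have := ((hf (-x) (hIneg hx)).comp x (hasDerivAt_neg x))
    simpa [mul_comm, Function.comp_def] using this
  have hgd : ∀ x ∈ Set.Ioo (-b) b, HasDerivAt g (g' x) x := by
    intro x hx
    have hder := ((hf x hx).sub (hfneg x hx)).div_const 2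
    have e : g' x = (f' x - -(f' (-x)))/2 := by simp only [hg'def]; ring
    rw [e]; exact hder
  have hhd : ∀ x ∈ Set.Ioo (-b) b, HasDerivAt h (h' x) x := by
    intro x hx
    have hder := ((hf x hx).add (hfneg x hx)).div_const 2
    have e : h' x = (f' x + -(f' (-x)))/2 := by simp only [hh'def]; ring
    rw [e]; exact hder
  -- mean of g is zero
  have hgmean : ∫ x, g x ∂μ = 0 := hodd_int g hg_odd
  have hhmean : ∫ x, h x ∂μ = m := by
    have : ∫ x, f x ∂μ = ∫ x, g x ∂μ + ∫ x, h x ∂μ := by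
      rw [← integral_add hg1 hh1]
      congr 1; funext x; simp only [hgdef, hhdef]; ring
    rw [hgmean] at this; linarith [this]
  -- key quantities
  set A : ℝ := ∫ x, (g' x)^2 ∂μ with hAdef
  set B : ℝ := ∫ x, (h' x)^2 ∂μ with hBdef
  set C : ℝ := ∫ x, (g x)^2 ∂μ with hCdef
  set D : ℝ := ∫ x, (h x - m)^2 ∂μ with hDdef
  have hA0 : 0 ≤ A := integral_nonneg fun x => sq_nonneg _
  have hB0 : 0 ≤ B := integral_nonneg fun x => sq_nonneg _
  have hC0 : 0 ≤ C := integral_nonneg fun x => sq_nonneg _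
  have hD0 : 0 ≤ D := integral_nonneg fun x => sq_nonneg _
  -- cross terms vanish
  have hcross_gh : ∫ x, g x * (h x - m) ∂μ = 0 := by
    apply hodd_int
    intro x; rw [hg_odd, hh_even]; ring
  have hcross_gh' : ∫ x, g' x * h' x ∂μ = 0 := by
    apply hodd_int
    intro x; rw [hg'_even, hh'_odd]; ring
  have hint_gh : Integrable (fun x => g x * (h x - m)) μ :=
    int_mul μ _ _ hgm (hhm.sub aestronglyMeasurable_const)
      hg2 (by
        have e : (fun x => (h x - m)^2) = fun x => ((h x)^2 - 2*m*(h x)) + m^2 := by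
          funext x; ring
        rw [e]; exact ((hh2.sub (hh1.const_mul _)).add (integrable_const _)))
  have hint_gh' : Integrable (fun x => g' x * h' x) μ :=
    int_mul μ _ _ hg'm hh'm hg'2 hh'2
  have hhm2 : Integrable (fun x => (h x - m)^2) μ := by
    have e : (fun x => (h x - m)^2) = fun x => ((h x)^2 - 2*m*(h x)) + m^2 := by
      funext x; ring
    rw [e]; exact ((hh2.sub (hh1.const_mul _)).add (integrable_const _))
  -- energy decomposition : ∫ f'^2 = A + B
  have hEnergy : ∫ x, (f' x)^2 ∂μ = A + B := by
    have e : (fun x => (f' x)^2)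
        = fun x => ((g' x)^2 + 2*(g' x * h' x)) + (h' x)^2 := by
      funext x; simp only [hg'def, hh'def]; ring
    have i2 : Integrable (fun x => 2*(g' x * h' x)) μ := hint_gh'.const_mul 2
    have i1 : Integrable (fun x => (g' x)^2 + 2*(g' x * h' x)) μ := hg'2.add i2
    rw [e, integral_add i1 hh'2, integral_add hg'2 i2, integral_const_mul, hcross_gh']
    simp [hAdef, hBdef]
  -- variance decomposition : Var f = C + D
  have hVarf : Var μ f = C + D := by
    rw [var_formula μ f hf1 hf2, ← hmdef]
    have e : (fun x => (f x - m)^2)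
        = fun x => ((g x)^2 + 2*(g x * (h x - m))) + (h x - m)^2 := by
      funext x; simp only [hgdef, hhdef]; ring
    have i2 : Integrable (fun x => 2*(g x * (h x - m))) μ := hint_gh.const_mul 2
    have i1 : Integrable (fun x => (g x)^2 + 2*(g x * (h x - m))) μ := hg2.add i2
    rw [e, integral_add i1 hhm2, integral_add hg2 i2, integral_const_mul, hcross_gh]
    simp [hCdef, hDdef]
  have hVarg : Var μ g = C := by
    rw [var_formula μ g hg1 hg2, hgmean]
    simp [hCdef]
  -- Var f positive
  have hVarfpos : 0 < Var μ f := by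
    rcases lt_or_eq_of_le (by rw [hVarf]; positivity : (0:ℝ) ≤ Var μ f) with hlt | heq
    · exact hlt
    exfalso
    have hzero : ∫ x, (f x - m)^2 ∂μ = 0 := by
      rw [← var_formula μ f hf1 hf2, ← heq]
    have hae0 : ∀ᵐ x ∂μ, (f x - m)^2 = 0 := by
      have := (integral_eq_zero_iff_of_nonneg (fun x => sq_nonneg (f x - m))
        (by
          have e : (fun x => (f x - m)^2) = fun x => ((f x)^2 - 2*m*(f x)) + m^2 := by
            funext x; ring
          rw [e]; exact ((hf2.sub (hf1.const_mul _)).add (integrable_const _)))).mp hzero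
      filter_upwards [this] with x hx
      simpa using hx
    have : ∀ x ∈ Set.Ioo (-b) b, f x - m = 0 := by
      apply zero_on b ρ μ hμ hc hpos h0 (fun x => f x - m)
        (hfc.sub continuousOn_const)
      filter_upwards [hae0] with x hx
      exact pow_eq_zero_iff (n := 2) (by norm_num) |>.mp hx
    obtain ⟨x, hx, y, hy, hxy⟩ := hnc
    have e1 := this x hx
    have e2 := this y hy
    apply hxy; linarith
  have hCD : 0 < C + D := by rw [← hVarf]; exact hVarfpos
  -- the reflected candidate
  set h₀ : ℝ := h 0 with hh0def
  set k : ℝ → ℝ := fun x => if 0 ≤ x then h x - h₀ else -(h (-x) - h₀) with hkdef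
  set k' : ℝ → ℝ := fun x => h' |x| with hk'def
  have hk_odd : ∀ x, k (-x) = - k x := by
    intro x
    rcases lt_trichotomy x 0 with hx | hx | hx
    · have h1 : ¬ (0:ℝ) ≤ x := not_le.mpr hx
      have h2 : (0:ℝ) ≤ -x := by linarith
      simp only [hkdef, h1, h2, if_true, if_false, neg_neg]
      try ring
    · subst hx; simp [hkdef, hh0def]
    · have h1 : (0:ℝ) ≤ x := hx.le
      have h2 : ¬ (0:ℝ) ≤ -x := by simp; linarith
      simp only [hkdef, h1, h2, if_true, if_false, neg_neg]
  have hk_sq : ∀ x, (k x)^2 = (h x - h₀)^2 := by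
    intro x
    by_cases hx : 0 ≤ x
    · simp [hkdef, hx]
    · have : (0:ℝ) ≤ -x := by push_neg at hx; linarith
      simp only [hkdef, hx, if_false]
      rw [hh_even]
      ring
  have hk'_sq : ∀ x, (k' x)^2 = (h' x)^2 := by
    intro x
    rcases abs_choice x with habs | habs
    · simp [hk'def, habs]
    · simp only [hk'def, habs, hh'_odd]
      ring
  have hk2 : Integrable (fun x => (k x)^2) μ := by
    have e : (fun x => (k x)^2) = fun x => (h x - h₀)^2 := funext hk_sq
    rw [e]
    have e2 : (fun x => (h x - h₀)^2) = fun x => ((h x)^2 - 2*h₀*(h x)) + h₀^2 := by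
      funext x; ring
    rw [e2]; exact ((hh2.sub (hh1.const_mul _)).add (integrable_const _))
  have hk'2 : Integrable (fun x => (k' x)^2) μ := by
    have e : (fun x => (k' x)^2) = fun x => (h' x)^2 := funext hk'_sq
    rw [e]; exact hh'2
  have hk1 : Integrable k μ := by
    apply int_self μ k _ hk2
    -- measurability of k
    have : k = fun x => (if 0 ≤ x then (1:ℝ) else -1) * (h |x| - h₀) := by
      funext x
      by_cases hx : 0 ≤ x
      · simp [hkdef, hx, abs_of_nonneg hx]
      · push_neg at hx
        simp [hkdef, not_le.mpr hx, abs_of_neg hx]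
    rw [this]
    apply AEStronglyMeasurable.mul
    · exact (Measurable.ite measurableSet_Ici measurable_const measurable_const).aestronglyMeasurable
    · have habs : ∀ x, h |x| = h x := by
        intro x
        rcases abs_choice x with habs | habs
        · rw [habs]
        · rw [habs, hh_even]
      have : (fun x => h |x| - h₀) = fun x => h x - h₀ := by
        funext x; rw [habs]
      rw [this]
      exact hhm.sub aestronglyMeasurable_const
  have hkmean : ∫ x, k x ∂μ = 0 := hodd_int k hk_odd
  -- E := Var k
  set E : ℝ := ∫ x, (k x)^2 ∂μ with hEdef
  have hVark : Var μ k = E := by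
    rw [var_formula μ k hk1 hk2, hkmean]
    simp [hEdef]
  have hE_int : ∫ x, (k' x)^2 ∂μ = B := by
    rw [hBdef]
    congr 1; funext x; exact hk'_sq x
  -- E ≥ D
  have hED : D ≤ E := by
    have e1 : E = ∫ x, (h x - h₀)^2 ∂μ := by
      rw [hEdef]; congr 1; funext x; exact hk_sq x
    rw [e1, hDdef, expand_sq μ h hh1 hh2 h₀, expand_sq μ h hh1 hh2 m, hhmean]
    nlinarith [sq_nonneg (m - h₀)]
  -- derivative of k
  have hh'0 : h' 0 = 0 := by simp [hh'def]
  have hkd : ∀ x ∈ Set.Ioo (-b) b, HasDerivAt k (k' x) x := by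
    intro x hx
    rcases lt_trichotomy x 0 with hxs | hxs | hxs
    · -- x < 0 : near x, k y = -(h (-y) - h₀)
      have hev : k =ᶠ[nhds x] fun y => -(h (-y) - h₀) := by
        filter_upwards [IsOpen.mem_nhds isOpen_Iio (Set.mem_Iio.mpr hxs)] with y hy
        simp [hkdef, not_le.mpr (Set.mem_Iio.mp hy)]
      have hd : HasDerivAt (fun y => -(h (-y) - h₀)) (h' (-x)) x := by
        have h1 : HasDerivAt (fun y => h (-y)) (-(h' (-x))) x := by
          have := ((hhd (-x) (hIneg hx)).comp x (hasDerivAt_neg x))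
          simpa [mul_comm, Function.comp_def] using this
        have := ((h1.sub_const h₀)).neg
        simpa [Pi.neg_def] using this
      have : HasDerivAt k (h' (-x)) x := hd.congr_of_eventuallyEq hev
      have habs : k' x = h' (-x) := by
        rw [hk'def]; simp only []
        rw [abs_of_neg hxs]
      rw [habs]; exact this
    · -- x = 0 : use slope characterization
      subst hxs
      have hk0 : k 0 = 0 := by simp [hkdef, hh0def]
      have habs : k' 0 = 0 := by rw [hk'def]; simp [hh'0]
      rw [habs]
      rw [hasDerivAt_iff_tendsto_slope]
      have hslope : ∀ y : ℝ, y ≠ 0 → slope k 0 y = slope h 0 |y| := by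
        intro y hy
        rcases lt_or_gt_of_ne hy with hys | hys
        · have hne : -y ≠ 0 := by intro hcon; apply hy; linarith
          rw [slope_def_field, slope_def_field, hk0, abs_of_neg hys]
          simp only [hkdef, if_neg (not_le.mpr hys), sub_zero]
          rw [div_eq_div_iff hy hne]
          ring
        · rw [slope_def_field, slope_def_field, hk0, abs_of_pos hys]
          simp only [hkdef, if_pos hys.le, sub_zero, hh0def]
      -- slope of h at 0 tends to h' 0 = 0
      have hh_slope : Filter.Tendsto (slope h 0) (nhdsWithin 0 {0}ᶜ) (nhds 0) := by
        have := hasDerivAt_iff_tendsto_slope.mp (hhd 0 (by constructor <;> simpa using hb))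
        rwa [hh'0] at this
      have habs_tendsto : Filter.Tendsto (fun y : ℝ => |y|) (nhdsWithin 0 {0}ᶜ)
          (nhdsWithin 0 {0}ᶜ) := by
        apply tendsto_nhdsWithin_of_tendsto_nhds_of_eventually_within
        · have := (continuous_abs.tendsto (0:ℝ)).mono_left
            (nhdsWithin_le_nhds (s := ({0}ᶜ : Set ℝ)))
          simpa using this
        · filter_upwards [self_mem_nhdsWithin] with y hy
          simpa using (abs_ne_zero.mpr hy)
      have hcomp := hh_slope.comp habs_tendsto
      refine Filter.Tendsto.congr' ?_ hcomp
      filter_upwards [self_mem_nhdsWithin] with y hy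
      simpa [Function.comp] using (hslope y hy).symm
    · -- x > 0
      have hev : k =ᶠ[nhds x] fun y => h y - h₀ := by
        filter_upwards [IsOpen.mem_nhds isOpen_Ioi (Set.mem_Ioi.mpr hxs)] with y hy
        simp [hkdef, le_of_lt (Set.mem_Ioi.mp hy)]
      have hd : HasDerivAt (fun y => h y - h₀) (h' x) x := (hhd x hx).sub_const h₀
      have : HasDerivAt k (h' x) x := hd.congr_of_eventuallyEq hev
      have habs : k' x = h' x := by
        rw [hk'def]; simp only []
        rw [abs_of_pos hxs]
      rw [habs]; exact this
  -- g is continuous on I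
  have hgc : ContinuousOn g (Set.Ioo (-b) b) :=
    fun x hx => ((hgd x hx).continuousAt).continuousWithinAt
  -- final case analysis
  by_cases hmain : 0 < C ∧ A * (C + D) ≤ (A + B) * C
  · obtain ⟨hCpos, hineq⟩ := hmain
    refine ⟨g, g', hg_odd, hgd, hg2, hg'2, by rw [hVarg]; exact hCpos.ne', ?_⟩
    rw [hVarg, hVarf, hEnergy, ← hAdef]
    rw [div_le_div_iff₀ hCpos hCD]
    linarith
  · -- show D > 0 and B*(C+D) ≤ (A+B)*D
    have hkey : 0 < D ∧ B * (C + D) ≤ (A + B) * D := by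
      by_cases hCz : C = 0
      · -- then A = 0
        have hg0 : ∀ x ∈ Set.Ioo (-b) b, g x = 0 := by
          apply zero_on b ρ μ hμ hc hpos h0 g hgc
          have hzero : ∫ x, (g x)^2 ∂μ = 0 := by rw [← hCdef]; exact hCz
          have := (integral_eq_zero_iff_of_nonneg (fun x => sq_nonneg (g x)) hg2).mp hzero
          filter_upwards [this] with x hx
          have hgx : (g x)^2 = 0 := by simpa using hx
          exact pow_eq_zero_iff (n := 2) (by norm_num) |>.mp hgx
        have hA : A = 0 := by
          rw [hAdef]
          have : ∀ᵐ x ∂μ, (g' x)^2 = 0 := by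
            filter_upwards [hae] with x hx
            have hd0 : HasDerivAt g 0 x := by
              have : g =ᶠ[nhds x] fun _ => 0 := by
                filter_upwards [IsOpen.mem_nhds isOpen_Ioo hx] with y hy
                exact hg0 y hy
              exact (hasDerivAt_const x 0).congr_of_eventuallyEq this
            have : g' x = 0 := ((hgd x hx).unique hd0)
            simp [this]
          calc ∫ x, (g' x)^2 ∂μ = ∫ _, (0:ℝ) ∂μ := integral_congr_ae this
            _ = 0 := by simp
        have hDpos : 0 < D := by rw [hCz] at hCD; simpa using hCD
        constructor
        · exact hDpos
        · have e : B * (C + D) = (A + B) * D := by rw [hA, hCz]; ring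
          exact le_of_eq e
      · have hCpos : 0 < C := lt_of_le_of_ne hC0 (Ne.symm hCz)
        have hineq : (A + B) * C < A * (C + D) := by
          by_contra hle
          exact hmain ⟨hCpos, not_lt.mp hle⟩
        have hAD : B * C < A * D := by nlinarith
        have hDpos : 0 < D := by
          by_contra hDz
          have : D = 0 := le_antisymm (not_lt.mp hDz) hD0
          rw [this] at hAD
          nlinarith
        exact ⟨hDpos, by nlinarith⟩
    obtain ⟨hDpos, hineq⟩ := hkey
    have hEpos : 0 < E := lt_of_lt_of_le hDpos hED
    refine ⟨k, k', hk_odd, hkd, hk2, hk'2, by rw [hVark]; exact hEpos.ne', ?_⟩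
    rw [hVark, hVarf, hEnergy, hE_int]
    calc B / E ≤ B / D := by
          apply div_le_div_of_nonneg_left hB0 ?_ hED
          · exact hDpos
      _ ≤ (A + B) / (C + D) := by
          rw [div_le_div_iff₀ hDpos hCD]
          linarith
end

section
/- The standard Gaussian measure N(0,1) restricted (and renormalized) to a symmetric interval [−b, b] has Poincaré constant at most 4b²/π², i.e., at most the Poincaré constant of the uniform measure on [−b, b]. -/
open MeasureTheory Real Set

section Aux
open intervalIntegral Topology Filter

lemma half_c (b c : ℝ) (hb : 0 < b) (hc0 : 0 < c) (hcb : c < b) (g g' : ℝ → ℝ)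
    (hg : ∀ x ∈ Set.Ico 0 b, HasDerivAt g (g' x) x)
    (hg0 : g 0 = 0)
    (hI : IntegrableOn (fun x => g x ^ 2 * Real.exp (-x^2/2)) (Set.Ioc 0 b) volume)
    (hI' : IntegrableOn (fun x => g' x ^ 2 * Real.exp (-x^2/2)) (Set.Ioc 0 b) volume) :
    (Real.pi/(2*b))^2 * ∫ x in (0:ℝ)..c, g x ^ 2 * Real.exp (-x^2/2)
      ≤ ∫ x in (0:ℝ)..c, g' x ^ 2 * Real.exp (-x^2/2) := by
  have hπ := Real.pi_pos
  set ω : ℝ := Real.pi / (2*b) with hω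
  have hω0 : 0 < ω := by positivity
  set s : ℝ := b - c with hs
  have hs0 : 0 < s := by simp [hs]; linarith
  set ρ : ℝ → ℝ := fun x => Real.exp (-x^2/2) with hρ
  set k : ℝ → ℝ := fun x => ω * Real.cos (ω*(x+s)) / Real.sin (ω*(x+s)) with hk
  set K : ℝ → ℝ := fun x => k x * ρ x with hK
  have huIcc : Set.uIcc (0:ℝ) c = Set.Icc 0 c := Set.uIcc_of_le hc0.le
  -- basic trig facts on Icc 0 c
  have hθmem : ∀ x ∈ Set.Icc (0:ℝ) c, 0 < ω*(x+s) ∧ ω*(x+s) ≤ Real.pi/2 := by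
    intro x hx
    constructor
    · have : 0 < x + s := by have := hx.1; linarith
      positivity
    · have hxc : x + s ≤ b := by have := hx.2; simp [hs]; linarith
      calc ω*(x+s) ≤ ω*b := by nlinarith
        _ = Real.pi/2 := by rw [hω]; field_simp
  have hsin : ∀ x ∈ Set.Icc (0:ℝ) c, 0 < Real.sin (ω*(x+s)) := by
    intro x hx
    obtain ⟨h1, h2⟩ := hθmem x hx
    exact Real.sin_pos_of_pos_of_lt_pi h1 (lt_of_le_of_lt h2 (by linarith))
  have hcos : ∀ x ∈ Set.Icc (0:ℝ) c, 0 ≤ Real.cos (ω*(x+s)) := by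
    intro x hx
    obtain ⟨h1, h2⟩ := hθmem x hx
    exact Real.cos_nonneg_of_mem_Icc ⟨by nlinarith [h1, hπ], h2⟩
  have hknn : ∀ x ∈ Set.Icc (0:ℝ) c, 0 ≤ k x := by
    intro x hx
    have := hsin x hx; have := hcos x hx
    have : 0 ≤ ω * Real.cos (ω*(x+s)) := by positivity
    exact div_nonneg this (hsin x hx).le
  have hρpos : ∀ x : ℝ, 0 < ρ x := fun x => Real.exp_pos _
  -- derivative of K
  have hKd : ∀ x ∈ Set.Icc (0:ℝ) c,
      HasDerivAt K (-(ω^2 + k x^2 + x * k x) * ρ x) x := by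
    intro x hx
    have hsx := (hsin x hx).ne'
    have haff : HasDerivAt (fun y : ℝ => ω*(y+s)) ω x := by
      simpa using ((hasDerivAt_id x).add_const s).const_mul ω
    have hsin' : HasDerivAt (fun y => Real.sin (ω*(y+s))) (Real.cos (ω*(x+s)) * ω) x :=
      (Real.hasDerivAt_sin _).comp x haff
    have hcos' : HasDerivAt (fun y => Real.cos (ω*(y+s))) (-Real.sin (ω*(x+s)) * ω) x :=
      (Real.hasDerivAt_cos _).comp x haff
    have hkd : HasDerivAt k ((ω * (-Real.sin (ω*(x+s)) * ω) * Real.sin (ω*(x+s))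
        - ω * Real.cos (ω*(x+s)) * (Real.cos (ω*(x+s)) * ω)) / (Real.sin (ω*(x+s)))^2) x :=
      (hcos'.const_mul ω).div hsin' hsx
    have hpoly : HasDerivAt (fun y : ℝ => -y^2/2) (-x) x := by
      have h2 := (hasDerivAt_pow 2 x).fun_neg.div_const 2
      exact h2.congr_deriv (by push_cast; ring)
    have hρd : HasDerivAt ρ (-x * ρ x) x := by
      have := (Real.hasDerivAt_exp (-x^2/2)).comp x hpoly
      simpa [hρ, mul_comm, Function.comp_def] using this
    have hmul := hkd.mul hρd
    have heq : (ω * (-Real.sin (ω*(x+s)) * ω) * Real.sin (ω*(x+s))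
        - ω * Real.cos (ω*(x+s)) * (Real.cos (ω*(x+s)) * ω)) / (Real.sin (ω*(x+s)))^2 * ρ x
        + k x * (-x * ρ x) = -(ω^2 + k x^2 + x * k x) * ρ x := by
      simp only [hk]
      field_simp
      ring
    rw [heq] at hmul
    exact hmul
  -- continuity facts
  have hcontρ : Continuous ρ := by
    rw [hρ]; fun_prop
  have hcontk : ContinuousOn k (Set.Icc 0 c) := by
    rw [hk]
    apply ContinuousOn.div
    · fun_prop
    · fun_prop
    · exact fun x hx => (hsin x hx).ne'
  have hcontK : ContinuousOn K (Set.Icc 0 c) := hcontk.mul hcontρ.continuousOn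
  have hcontg : ContinuousOn g (Set.Icc 0 c) := fun x hx =>
    ((hg x ⟨hx.1, lt_of_le_of_lt hx.2 hcb⟩).continuousAt).continuousWithinAt
  have hg'm : AEStronglyMeasurable g' (volume.restrict (Set.Ioc 0 c)) := by
    have hder : ∀ x ∈ Set.Ioc (0:ℝ) c, deriv g x = g' x :=
      fun x hx => (hg x ⟨hx.1.le, lt_of_le_of_lt hx.2 hcb⟩).deriv
    exact ((measurable_deriv g).aestronglyMeasurable).congr
      ((ae_restrict_iff' measurableSet_Ioc).2 (Filter.Eventually.of_forall hder))
  have hgm : AEStronglyMeasurable g (volume.restrict (Set.Ioc 0 c)) :=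
    (hcontg.mono Set.Ioc_subset_Icc_self).aestronglyMeasurable measurableSet_Ioc
  -- integrability
  have hsub : Set.Ioc (0:ℝ) c ⊆ Set.Ioc 0 b := Set.Ioc_subset_Ioc_right hcb.le
  have Egρ : IntegrableOn (fun x => g x ^ 2 * ρ x) (Set.Ioc 0 c) volume := hI.mono_set hsub
  have Eg'ρ : IntegrableOn (fun x => g' x ^ 2 * ρ x) (Set.Ioc 0 c) volume := hI'.mono_set hsub
  have hρlow : ∀ x ∈ Set.Ioc (0:ℝ) c, 1 ≤ ρ x * Real.exp (b^2/2) := by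
    intro x hx
    rw [hρ]
    rw [← Real.exp_add]
    apply Real.one_le_exp
    nlinarith [hx.1, hx.2]
  have hEg : IntegrableOn (fun x => g x ^ 2) (Set.Ioc 0 c) volume := by
    apply Integrable.mono' (Egρ.const_mul (Real.exp (b^2/2)))
    · exact hgm.pow 2
    · refine (ae_restrict_iff' measurableSet_Ioc).2 (Filter.Eventually.of_forall fun x hx => ?_)
      have h1 := hρlow x hx
      have h2 : (0:ℝ) ≤ g x ^ 2 := sq_nonneg _
      rw [Real.norm_eq_abs, abs_of_nonneg h2]
      nlinarith
  have hEg' : IntegrableOn (fun x => g' x ^ 2) (Set.Ioc 0 c) volume := by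
    apply Integrable.mono' (Eg'ρ.const_mul (Real.exp (b^2/2)))
    · exact hg'm.pow 2
    · refine (ae_restrict_iff' measurableSet_Ioc).2 (Filter.Eventually.of_forall fun x hx => ?_)
      have h1 := hρlow x hx
      have h2 : (0:ℝ) ≤ g' x ^ 2 := sq_nonneg _
      rw [Real.norm_eq_abs, abs_of_nonneg h2]
      nlinarith
  have E2gg' : IntegrableOn (fun x => 2 * g x * g' x) (Set.Ioc 0 c) volume := by
    apply Integrable.mono' (hEg.add hEg')
    · exact ((hgm.const_mul 2).mul hg'm)
    · refine (ae_restrict_iff' measurableSet_Ioc).2 (Filter.Eventually.of_forall fun x hx => ?_)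
      rw [Real.norm_eq_abs, abs_le]
      simp only [Pi.add_apply]
      constructor <;> nlinarith [sq_nonneg (g x - g' x), sq_nonneg (g x + g' x)]
  -- interval integrable versions
  have hii : ∀ {F : ℝ → ℝ}, IntegrableOn F (Set.Ioc 0 c) volume →
      IntervalIntegrable F volume 0 c := by
    intro F hF
    rw [intervalIntegrable_iff, Set.uIoc_of_le hc0.le]
    exact hF
  have iiEgρ := hii Egρ
  have iiEg'ρ := hii Eg'ρ
  have iiEg := hii hEg
  have ii2gg' := hii E2gg'
  have iiK' : IntervalIntegrable (fun x => -(ω^2 + k x^2 + x * k x) * ρ x) volume 0 c := by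
    apply ContinuousOn.intervalIntegrable
    rw [huIcc]
    exact (((continuousOn_const.add (hcontk.pow 2)).add
      (continuousOn_id.mul hcontk)).neg).mul hcontρ.continuousOn
  have ii2gg'K : IntervalIntegrable (fun x => (2 * g x * g' x) * K x) volume 0 c := by
    apply ii2gg'.mul_continuousOn
    rw [huIcc]; exact hcontK
  have iiP2 : IntervalIntegrable (fun x => g x ^ 2 * (k x ^ 2 * ρ x)) volume 0 c := by
    apply iiEg.mul_continuousOn
    rw [huIcc]; exact (hcontk.pow 2).mul hcontρ.continuousOn
  have iiP3 : IntervalIntegrable (fun x => g x ^ 2 * (x * k x * ρ x)) volume 0 c := by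
    apply iiEg.mul_continuousOn
    rw [huIcc]; exact (continuousOn_id.mul hcontk).mul hcontρ.continuousOn
  -- integration by parts
  have hu : ∀ x ∈ Set.uIcc (0:ℝ) c, HasDerivAt (fun y => g y ^ 2) (2 * g x * g' x) x := by
    intro x hx
    rw [huIcc] at hx
    have h2 := (hg x ⟨hx.1, lt_of_le_of_lt hx.2 hcb⟩).fun_pow 2
    exact h2.congr_deriv (by push_cast; ring)
  have hibp := intervalIntegral.integral_mul_deriv_eq_deriv_mul hu
    (fun x hx => hKd x (huIcc ▸ hx)) ii2gg' iiK'
  have hKc : K c = 0 := by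
    have hcs : ω * (c + s) = Real.pi/2 := by
      rw [hs, hω]
      field_simp
      ring
    simp only [hK, hk, hcs, Real.cos_pi_div_two]
    simp
  have hK0 : g 0 ^ 2 * K 0 = 0 := by rw [hg0]; ring
  rw [hKc] at hibp
  -- expansion
  have hsplit1 : ∫ x in (0:ℝ)..c, (g' x - k x * g x)^2 * ρ x
      = (∫ x in (0:ℝ)..c, g' x ^ 2 * ρ x) - (∫ x in (0:ℝ)..c, (2 * g x * g' x) * K x)
        + ∫ x in (0:ℝ)..c, g x ^ 2 * (k x ^ 2 * ρ x) := by
    rw [show (fun x => (g' x - k x * g x)^2 * ρ x)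
        = fun x => (g' x ^ 2 * ρ x - (2 * g x * g' x) * K x + g x ^ 2 * (k x ^ 2 * ρ x)) from
      funext fun x => by simp only [hK]; ring]
    rw [intervalIntegral.integral_add (iiEg'ρ.sub ii2gg'K) iiP2,
      intervalIntegral.integral_sub iiEg'ρ ii2gg'K]
  have hnn1 : 0 ≤ ∫ x in (0:ℝ)..c, (g' x - k x * g x)^2 * ρ x := by
    apply intervalIntegral.integral_nonneg hc0.le
    intro x hx
    have := (hρpos x).le
    positivity
  have hsplit2 : ∫ x in (0:ℝ)..c, g x ^ 2 * (-(ω^2 + k x^2 + x * k x) * ρ x)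
      = -(ω^2 * (∫ x in (0:ℝ)..c, g x ^ 2 * ρ x)
          + (∫ x in (0:ℝ)..c, g x ^ 2 * (k x ^ 2 * ρ x))
          + ∫ x in (0:ℝ)..c, g x ^ 2 * (x * k x * ρ x)) := by
    rw [show (fun x => g x ^ 2 * (-(ω^2 + k x^2 + x * k x) * ρ x))
        = fun x => -(ω^2 * (g x ^ 2 * ρ x) + g x ^ 2 * (k x ^ 2 * ρ x)
          + g x ^ 2 * (x * k x * ρ x)) from funext fun x => by ring]
    rw [intervalIntegral.integral_neg,
      intervalIntegral.integral_add (((iiEgρ.const_mul _)).add iiP2) iiP3,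
      intervalIntegral.integral_add (iiEgρ.const_mul _) iiP2,
      intervalIntegral.integral_const_mul]
  have hP3 : 0 ≤ ∫ x in (0:ℝ)..c, g x ^ 2 * (x * k x * ρ x) := by
    apply intervalIntegral.integral_nonneg hc0.le
    intro x hx
    exact mul_nonneg (sq_nonneg _)
      (mul_nonneg (mul_nonneg hx.1 (hknn x hx)) (hρpos x).le)
  have main : ω^2 * (∫ x in (0:ℝ)..c, g x ^ 2 * ρ x) ≤ ∫ x in (0:ℝ)..c, g' x ^ 2 * ρ x := by
    rw [hsplit2, hK0] at hibp
    linarith [hnn1, hsplit1, hibp]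
  simpa only [hω, hρ] using main

lemma half (b : ℝ) (hb : 0 < b) (g g' : ℝ → ℝ)
    (hg : ∀ x ∈ Set.Ico 0 b, HasDerivAt g (g' x) x)
    (hg0 : g 0 = 0)
    (hI : IntegrableOn (fun x => g x ^ 2 * Real.exp (-x^2/2)) (Set.Ioc 0 b) volume)
    (hI' : IntegrableOn (fun x => g' x ^ 2 * Real.exp (-x^2/2)) (Set.Ioc 0 b) volume) :
    (Real.pi/(2*b))^2 * ∫ x in (0:ℝ)..b, g x ^ 2 * Real.exp (-x^2/2)
      ≤ ∫ x in (0:ℝ)..b, g' x ^ 2 * Real.exp (-x^2/2) := by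
  have hIcc : IntegrableOn (fun x => g x ^ 2 * Real.exp (-x^2/2)) (Set.Icc 0 b) volume := by
    rwa [integrableOn_Icc_iff_integrableOn_Ioc]
  have hI'cc : IntegrableOn (fun x => g' x ^ 2 * Real.exp (-x^2/2)) (Set.Icc 0 b) volume := by
    rwa [integrableOn_Icc_iff_integrableOn_Ioc]
  set F : ℝ → ℝ := fun c => ∫ x in (0:ℝ)..c, g x ^ 2 * Real.exp (-x^2/2) with hF
  have hcontF : ContinuousOn F (Set.Icc 0 b) := by
    have := intervalIntegral.continuousOn_primitive_interval
      (f := fun x => g x ^ 2 * Real.exp (-x^2/2)) (a := (0:ℝ)) (b := b) (μ := volume) ?_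
    · rwa [Set.uIcc_of_le hb.le] at this
    · rwa [Set.uIcc_of_le hb.le]
  have step : ∀ c ∈ Set.Ioo (0:ℝ) b,
      (Real.pi/(2*b))^2 * F c ≤ ∫ x in (0:ℝ)..b, g' x ^ 2 * Real.exp (-x^2/2) := by
    intro c hc
    refine le_trans (half_c b c hb hc.1 hc.2 g g' hg hg0 hI hI') ?_
    apply intervalIntegral.integral_mono_interval (le_refl (0:ℝ)) hc.1.le hc.2.le
    · refine (ae_restrict_iff' measurableSet_Ioc).2 (Filter.Eventually.of_forall fun x hx => ?_)
      positivity
    · rw [intervalIntegrable_iff, Set.uIoc_of_le hb.le]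
      exact hI'
  have hne : (𝓝[Set.Ioo (0:ℝ) b] b).NeBot := right_nhdsWithin_Ioo_neBot hb
  have htend : Filter.Tendsto F (𝓝[Set.Ioo (0:ℝ) b] b) (𝓝 (F b)) := by
    have h1 : ContinuousWithinAt F (Set.Icc 0 b) b :=
      hcontF b (Set.right_mem_Icc.2 hb.le)
    exact (h1.mono Set.Ioo_subset_Icc_self).tendsto
  have htend2 : Filter.Tendsto (fun c => (Real.pi/(2*b))^2 * F c)
      (𝓝[Set.Ioo (0:ℝ) b] b) (𝓝 ((Real.pi/(2*b))^2 * F b)) := htend.const_mul _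
  exact le_of_tendsto htend2 (eventually_mem_nhdsWithin.mono step)

lemma whole (b : ℝ) (hb : 0 < b) (f f' : ℝ → ℝ)
    (hf : ∀ x ∈ Set.Ioo (-b) b, HasDerivAt f (f' x) x)
    (hI : IntegrableOn (fun x => (f x - f 0)^2 * Real.exp (-x^2/2)) (Set.Ioc (-b) b) volume)
    (hI' : IntegrableOn (fun x => f' x ^ 2 * Real.exp (-x^2/2)) (Set.Ioc (-b) b) volume) :
    ∫ x in (-b)..b, (f x - f 0)^2 * Real.exp (-x^2/2)
      ≤ (4 * b^2 / Real.pi^2) * ∫ x in (-b)..b, f' x ^ 2 * Real.exp (-x^2/2) := by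
  have hπ := Real.pi_pos
  set G : ℝ → ℝ := fun x => (f x - f 0)^2 * Real.exp (-x^2/2) with hG
  set H : ℝ → ℝ := fun x => f' x ^ 2 * Real.exp (-x^2/2) with hH
  have hiiG : IntervalIntegrable G volume (-b) b := by
    rw [intervalIntegrable_iff, Set.uIoc_of_le (by linarith)]; exact hI
  have hiiH : IntervalIntegrable H volume (-b) b := by
    rw [intervalIntegrable_iff, Set.uIoc_of_le (by linarith)]; exact hI'
  have hiiG1 : IntervalIntegrable G volume (-b) 0 := hiiG.mono_set (by
    rw [Set.uIcc_of_le (by linarith : (-b:ℝ) ≤ 0), Set.uIcc_of_le (by linarith : (-b:ℝ) ≤ b)]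
    exact Set.Icc_subset_Icc le_rfl hb.le)
  have hiiG2 : IntervalIntegrable G volume 0 b := hiiG.mono_set (by
    rw [Set.uIcc_of_le hb.le, Set.uIcc_of_le (by linarith : (-b:ℝ) ≤ b)]
    exact Set.Icc_subset_Icc (by linarith) le_rfl)
  have hiiH1 : IntervalIntegrable H volume (-b) 0 := hiiH.mono_set (by
    rw [Set.uIcc_of_le (by linarith : (-b:ℝ) ≤ 0), Set.uIcc_of_le (by linarith : (-b:ℝ) ≤ b)]
    exact Set.Icc_subset_Icc le_rfl hb.le)
  have hiiH2 : IntervalIntegrable H volume 0 b := hiiH.mono_set (by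
    rw [Set.uIcc_of_le hb.le, Set.uIcc_of_le (by linarith : (-b:ℝ) ≤ b)]
    exact Set.Icc_subset_Icc (by linarith) le_rfl)
  -- split at 0
  have hsplitG : (∫ x in (-b)..(0:ℝ), G x) + ∫ x in (0:ℝ)..b, G x = ∫ x in (-b)..b, G x :=
    intervalIntegral.integral_add_adjacent_intervals hiiG1 hiiG2
  have hsplitH : (∫ x in (-b)..(0:ℝ), H x) + ∫ x in (0:ℝ)..b, H x = ∫ x in (-b)..b, H x :=
    intervalIntegral.integral_add_adjacent_intervals hiiH1 hiiH2
  -- right half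
  have hright : (Real.pi/(2*b))^2 * ∫ x in (0:ℝ)..b, G x ≤ ∫ x in (0:ℝ)..b, H x := by
    apply half b hb (fun x => f x - f 0) f'
    · intro x hx
      exact ((hf x ⟨by linarith [hx.1], hx.2⟩).sub_const (f 0))
    · simp
    · rw [← Set.uIoc_of_le hb.le, ← intervalIntegrable_iff]; exact hiiG2
    · rw [← Set.uIoc_of_le hb.le, ← intervalIntegrable_iff]; exact hiiH2
  -- left half, by reflection
  have hrefl : ∀ x ∈ Set.Ico (0:ℝ) b,
      HasDerivAt (fun y => f (-y) - f 0) (-(f' (-x))) x := by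
    intro x hx
    have hmem : -x ∈ Set.Ioo (-b) b := ⟨by linarith [hx.2], by linarith [hx.1, hb]⟩
    have h1 := (hf (-x) hmem).comp x (hasDerivAt_neg x)
    have h2 := h1.sub_const (f 0)
    simpa [mul_comm] using h2
  have hGneg : (fun x => G (-x)) = (fun x => (f (-x) - f 0)^2 * Real.exp (-x^2/2)) := by
    funext x; simp [hG]
  have hHneg : (fun x => H (-x)) = (fun x => (-(f' (-x)))^2 * Real.exp (-x^2/2)) := by
    funext x; simp [hH]
  have hiiG2' : IntervalIntegrable (fun x => G (-x)) volume 0 b := by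
    have h1 := (IntervalIntegrable.iff_comp_neg (f := G)).1 hiiG1.symm
    simpa using h1
  have hiiH2' : IntervalIntegrable (fun x => H (-x)) volume 0 b := by
    have h1 := (IntervalIntegrable.iff_comp_neg (f := H)).1 hiiH1.symm
    simpa using h1
  have e1 : ∫ x in (0:ℝ)..b, (f (-x) - f 0)^2 * Real.exp (-x^2/2)
      = ∫ x in (-b)..(0:ℝ), G x := by
    rw [← hGneg, intervalIntegral.integral_comp_neg (f := G)]
    norm_num
  have e2 : ∫ x in (0:ℝ)..b, (-(f' (-x)))^2 * Real.exp (-x^2/2)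
      = ∫ x in (-b)..(0:ℝ), H x := by
    rw [← hHneg, intervalIntegral.integral_comp_neg (f := H)]
    norm_num
  have hleft : (Real.pi/(2*b))^2 * ∫ x in (-b)..(0:ℝ), G x ≤ ∫ x in (-b)..(0:ℝ), H x := by
    have hL := half b hb (fun y => f (-y) - f 0) (fun y => -(f' (-y))) hrefl (by simp)
      (by rw [← hGneg, ← Set.uIoc_of_le hb.le, ← intervalIntegrable_iff]; exact hiiG2')
      (by rw [← hHneg, ← Set.uIoc_of_le hb.le, ← intervalIntegrable_iff]; exact hiiH2')
    beta_reduce at hL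
    rw [e1, e2] at hL
    exact hL
  have htot : (Real.pi/(2*b))^2 * ∫ x in (-b)..b, G x ≤ ∫ x in (-b)..b, H x := by
    rw [← hsplitG, ← hsplitH, mul_add]
    exact add_le_add hleft hright
  have hc : (0:ℝ) < 4 * b^2 / Real.pi^2 := by positivity
  have h2 := mul_le_mul_of_nonneg_left htot hc.le
  rw [← mul_assoc, show (4 * b^2 / Real.pi^2) * (Real.pi/(2*b))^2 = 1 by
    field_simp; ring, one_mul] at h2
  exact h2

end Aux

open ProbabilityTheory in
/-- the standard Gaussian restricted to `[-b,b]` has Poincaré constant at most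
`4b²/π²`, the Poincaré constant of the uniform measure on `[-b,b]`. -/
theorem stmt8 (b : ℝ) (hb : 0 < b) (ν : Measure ℝ)
    (hν : ν = ((gaussianReal 0 1) (Set.Icc (-b) b))⁻¹ •
      (gaussianReal 0 1).restrict (Set.Icc (-b) b)) :
    PoincareOn ν (Set.Ioo (-b) b) (4 * b^2 / Real.pi^2) := by
  intro f f' hder hf2 hf'2
  have hπ := Real.pi_pos
  set μ : Measure ℝ := gaussianReal 0 1 with hμdef
  set Z : ENNReal := μ (Set.Icc (-b) b) with hZdef
  have hμ : μ = volume.withDensity (gaussianPDF 0 1) :=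
    gaussianReal_of_var_ne_zero 0 one_ne_zero
  -- Z is positive and finite
  have hZtop : Z ≠ ⊤ := measure_ne_top _ _
  have hZ0 : Z ≠ 0 := by
    rw [hZdef, hμdef, gaussianReal_apply 0 one_ne_zero]
    intro hcontra
    have hlow : ∀ x ∈ Set.Icc (-b) b, gaussianPDF 0 1 b ≤ gaussianPDF 0 1 x := by
      intro x hx
      apply ENNReal.ofReal_le_ofReal
      unfold gaussianPDFReal
      apply mul_le_mul_of_nonneg_left _ (by positivity)
      apply Real.exp_le_exp.2
      have h1 := hx.1; have h2 := hx.2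
      rw [div_le_div_iff_of_pos_right (by norm_num)]
      push_cast
      nlinarith
    have hge : gaussianPDF 0 1 b * volume (Set.Icc (-b) b)
        ≤ ∫⁻ x in Set.Icc (-b) b, gaussianPDF 0 1 x := by
      rw [← MeasureTheory.setLIntegral_const]
      apply MeasureTheory.setLIntegral_mono (measurable_gaussianPDF 0 1) hlow
    rw [hcontra] at hge
    have h1 : gaussianPDF 0 1 b ≠ 0 := (gaussianPDF_pos 0 one_ne_zero b).ne'
    have h2 : volume (Set.Icc (-b) b) ≠ 0 := by
      rw [Real.volume_Icc]
      simp only [ne_eq, ENNReal.ofReal_eq_zero, not_le]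
      linarith
    exact (ENNReal.mul_pos h1 h2).ne' (le_antisymm hge (zero_le))
  have hinv0 : Z⁻¹ ≠ 0 := ENNReal.inv_ne_zero.2 hZtop
  have hinvtop : Z⁻¹ ≠ ⊤ := ENNReal.inv_ne_top.2 hZ0
  -- pdf facts
  have hpdfnn : ∀ x : ℝ, 0 ≤ gaussianPDFReal 0 1 x := fun x => gaussianPDFReal_nonneg 0 1 x
  have hpdf : ∀ x : ℝ, gaussianPDFReal 0 1 x = (Real.sqrt (2*Real.pi))⁻¹ * Real.exp (-x^2/2) := by
    intro x
    unfold gaussianPDFReal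
    norm_num
  have hsq : (0:ℝ) < Real.sqrt (2*Real.pi) := Real.sqrt_pos.2 (by positivity)
  -- integrability transfer
  have key : ∀ h : ℝ → ℝ, Integrable h ν →
      IntegrableOn (fun x => h x * Real.exp (-x^2/2)) (Set.Ioc (-b) b) volume := by
    intro h hh
    rw [hν] at hh
    rw [MeasureTheory.integrable_smul_measure hinv0 hinvtop] at hh
    rw [hμ, MeasureTheory.restrict_withDensity measurableSet_Icc] at hh
    rw [integrable_withDensity_iff (measurable_gaussianPDF 0 1)
      (Filter.Eventually.of_forall fun x => ENNReal.ofReal_lt_top)] at hh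
    have hh2 := hh.const_mul (Real.sqrt (2*Real.pi))
    have heq : (fun x => Real.sqrt (2*Real.pi) * (h x * (gaussianPDF 0 1 x).toReal))
        = fun x => h x * Real.exp (-x^2/2) := by
      funext x
      rw [gaussianPDF, ENNReal.toReal_ofReal (hpdfnn x), hpdf x]
      field_simp
    rw [heq] at hh2
    have hh3 : IntegrableOn (fun x => h x * Real.exp (-x^2/2)) (Set.Icc (-b) b) volume := hh2
    exact hh3.mono_set Set.Ioc_subset_Icc_self
  -- integral conversion
  have hconv : ∀ h : ℝ → ℝ, ∫ x, h x ∂ν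
      = (Z.toReal)⁻¹ * ((Real.sqrt (2*Real.pi))⁻¹ * ∫ x in (-b)..b, h x * Real.exp (-x^2/2)) := by
    intro h
    rw [hν, MeasureTheory.integral_smul_measure, ENNReal.toReal_inv]
    congr 1
    rw [hμ, MeasureTheory.restrict_withDensity measurableSet_Icc]
    have hridentity : (volume.restrict (Set.Icc (-b) b)).withDensity (gaussianPDF 0 1)
        = (volume.restrict (Set.Icc (-b) b)).withDensity
          (fun x => ((gaussianPDFReal 0 1 x).toNNReal : ENNReal)) := rfl
    rw [hridentity, integral_withDensity_eq_integral_smul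
      ((measurable_gaussianPDFReal 0 1).real_toNNReal) h]
    have heq2 : (fun x => (gaussianPDFReal 0 1 x).toNNReal • h x)
        = fun x => (Real.sqrt (2*Real.pi))⁻¹ * (h x * Real.exp (-x^2/2)) := by
      funext x
      rw [NNReal.smul_def, Real.coe_toNNReal _ (hpdfnn x), hpdf x, smul_eq_mul]
      ring
    rw [heq2, MeasureTheory.integral_const_mul]
    congr 1
    rw [MeasureTheory.integral_Icc_eq_integral_Ioc,
      ← intervalIntegral.integral_of_le (by linarith : -b ≤ b)]
  -- integrable pieces
  have hIH : IntegrableOn (fun x => f' x ^ 2 * Real.exp (-x^2/2)) (Set.Ioc (-b) b) volume :=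
    key (fun x => (f' x)^2) hf'2
  have hIf2 : IntegrableOn (fun x => f x ^ 2 * Real.exp (-x^2/2)) (Set.Ioc (-b) b) volume :=
    key (fun x => (f x)^2) hf2
  have hfm : AEStronglyMeasurable f (volume.restrict (Set.Ioc (-b) b)) := by
    have h1 : ContinuousOn f (Set.Ioo (-b) b) := fun x hx =>
      (hder x hx).continuousAt.continuousWithinAt
    have h2 : AEStronglyMeasurable f (volume.restrict (Set.Ioo (-b) b)) :=
      h1.aestronglyMeasurable measurableSet_Ioo
    rwa [Measure.restrict_congr_set Ioo_ae_eq_Ioc] at h2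
  have hexpint : IntegrableOn (fun x => Real.exp (-x^2/2)) (Set.Ioc (-b) b) volume :=
    Continuous.integrableOn_Ioc (by fun_prop)
  have hIG : IntegrableOn (fun x => (f x - f 0)^2 * Real.exp (-x^2/2))
      (Set.Ioc (-b) b) volume := by
    apply Integrable.mono' ((hIf2.const_mul 2).add (hexpint.const_mul (2 * f 0 ^ 2)))
    · exact ((hfm.sub aestronglyMeasurable_const).pow 2).mul
        (Continuous.aestronglyMeasurable (by fun_prop))
    · refine (ae_restrict_iff' measurableSet_Ioc).2 (Filter.Eventually.of_forall fun x hx => ?_)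
      simp only [Pi.add_apply]
      have he : (0:ℝ) < Real.exp (-x^2/2) := Real.exp_pos _
      rw [Real.norm_eq_abs, abs_of_nonneg (by positivity)]
      nlinarith [sq_nonneg (f x + f 0), sq_nonneg (f x - f 0)]
  have hwhole := whole b hb f f' hder hIG hIH
  -- variance bound
  have hbdd : BddBelow (Set.range fun a => ∫ x, (f x - a)^2 ∂ν) := by
    refine ⟨0, ?_⟩
    rintro y ⟨a, rfl⟩
    exact integral_nonneg fun x => sq_nonneg _
  have hvar : Var ν f ≤ ∫ x, (f x - f 0)^2 ∂ν := ciInf_le hbdd (f 0)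
  have e1 := hconv (fun x => (f x - f 0)^2)
  have e2 := hconv (fun x => (f' x)^2)
  beta_reduce at e1 e2
  rw [e1] at hvar
  rw [e2]
  refine le_trans hvar ?_
  have hA1 : (0:ℝ) ≤ (Z.toReal)⁻¹ := by positivity
  have hA2 : (0:ℝ) ≤ (Real.sqrt (2*Real.pi))⁻¹ := by positivity
  calc (Z.toReal)⁻¹ * ((Real.sqrt (2*Real.pi))⁻¹
        * ∫ x in (-b)..b, (f x - f 0)^2 * Real.exp (-x^2/2))
      ≤ (Z.toReal)⁻¹ * ((Real.sqrt (2*Real.pi))⁻¹ * ((4 * b^2 / Real.pi^2)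
        * ∫ x in (-b)..b, f' x ^ 2 * Real.exp (-x^2/2))) := by
        exact mul_le_mul_of_nonneg_left (mul_le_mul_of_nonneg_left hwhole hA2) hA1
    _ = (4 * b^2 / Real.pi^2) * ((Z.toReal)⁻¹ * ((Real.sqrt (2*Real.pi))⁻¹
        * ∫ x in (-b)..b, f' x ^ 2 * Real.exp (-x^2/2))) := by ring
end

section
/- Let μ be the double exponential measure dμ(t) = (1/2) e^{−|t|} dt and 0 ≤ a < b. The restriction of μ to [a,b] has optimal Poincaré constant (1/4 + (π/(b−a))²)^{−1}, and the inequality is saturated by f(x) = e^{x/2}(−ω cos(ω(x−a)) + (1/2) sin(ω(x−a))) with ω = π/(b−a). -/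
open MeasureTheory Real Set Filter Topology
open scoped ENNReal NNReal
set_option linter.unusedSectionVars false
set_option linter.unusedTactic false
set_option maxHeartbeats 1000000



section setup
variable {a b : ℝ} (ha : 0 ≤ a) (hab : a < b) {ν μ : Measure ℝ}
  (hν : ν = MeasureTheory.volume.withDensity fun t =>
      ENNReal.ofReal ((1/2) * Real.exp (-|t|)))
  (hμ : μ = (ν (Set.Icc a b))⁻¹ • ν.restrict (Set.Icc a b))

lemma rho_meas_s11 : Measurable fun t : ℝ => ((1/2) * Real.exp (-|t|)).toNNReal := by
  measurability

include hab in
lemma Zpos : 0 < exp (-a) - exp (-b) := by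
  have := Real.exp_lt_exp.mpr (show -b < -a by linarith)
  linarith

include ha hab hν in
lemma mass_eq : ν (Set.Icc a b) = ENNReal.ofReal ((exp (-a) - exp (-b))/2) := by
  have hm : MeasurableSet (Icc a b) := measurableSet_Icc
  rw [hν, withDensity_apply _ hm]
  have h1 : ∀ x ∈ Icc a b, ENNReal.ofReal ((1/2) * Real.exp (-|x|))
      = ENNReal.ofReal ((1/2) * Real.exp (-x)) := by
    intro x hx; rw [abs_of_nonneg (le_trans ha hx.1)]
  rw [setLIntegral_congr_fun hm h1]
  rw [← ofReal_integral_eq_lintegral_ofReal]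
  · have : ∫ x in Icc a b, (1/2) * Real.exp (-x) = (exp (-a) - exp (-b))/2 := by
      rw [MeasureTheory.integral_Icc_eq_integral_Ioc, ← intervalIntegral.integral_of_le hab.le]
      have : ∀ x ∈ uIcc a b, HasDerivAt (fun y => -(1/2) * Real.exp (-y)) ((1/2) * Real.exp (-x)) x := by
        intro x _
        have h := ((hasDerivAt_neg x).exp).const_mul (-(1/2) : ℝ)
        refine h.congr_deriv ?_; ring
      rw [intervalIntegral.integral_eq_sub_of_hasDerivAt this]
      · ring
      · apply Continuous.intervalIntegrable; continuity
    rw [this]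
  · exact (continuous_const.mul (continuous_exp.comp continuous_neg)).continuousOn.integrableOn_compact isCompact_Icc
  · filter_upwards with x
    positivity

include ha hab hν hμ in
lemma integral_mu (g : ℝ → ℝ) :
    ∫ x, g x ∂μ = (exp (-a) - exp (-b))⁻¹ * ∫ x in Ioo a b, Real.exp (-x) * g x := by
  have hZ := Zpos (a := a) (b := b) hab
  rw [hμ, integral_smul_measure, mass_eq ha hab hν]
  rw [hν, restrict_withDensity measurableSet_Icc]
  have : (fun t : ℝ => ENNReal.ofReal ((1/2) * Real.exp (-|t|)))
      = (fun t : ℝ => (((1/2) * Real.exp (-|t|)).toNNReal : ℝ≥0∞)) := rfl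
  rw [this, integral_withDensity_eq_integral_smul rho_meas_s11]
  have h2 : ∫ x in Icc a b, ((1/2) * Real.exp (-|x|)).toNNReal • g x
      = ∫ x in Icc a b, (1/2) * (Real.exp (-x) * g x) := by
    apply setIntegral_congr_fun measurableSet_Icc
    intro x hx
    simp only [NNReal.smul_def, smul_eq_mul]
    rw [abs_of_nonneg (le_trans ha hx.1), Real.coe_toNNReal _ (by positivity)]
    ring
  rw [h2, MeasureTheory.integral_Icc_eq_integral_Ioc, MeasureTheory.integral_Ioc_eq_integral_Ioo,
    MeasureTheory.integral_const_mul]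
  rw [ENNReal.toReal_inv, ENNReal.toReal_ofReal (by positivity)]
  rw [smul_eq_mul]
  field_simp

include ha hab hν in
lemma mass_ne_zero : ν (Set.Icc a b) ≠ 0 := by
  rw [mass_eq ha hab hν]
  have := Zpos (a := a) (b := b) hab
  simp only [ne_eq, ENNReal.ofReal_eq_zero, not_le]
  linarith

include ha hab hν in
lemma mass_ne_top : ν (Set.Icc a b) ≠ ⊤ := by
  rw [mass_eq ha hab hν]; exact ENNReal.ofReal_ne_top

include ha hab hν hμ in
lemma mu_prob : IsProbabilityMeasure μ := by
  constructor
  rw [hμ, Measure.smul_apply, Measure.restrict_apply_univ, smul_eq_mul]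
  exact ENNReal.inv_mul_cancel (mass_ne_zero ha hab hν) (mass_ne_top ha hab hν)

include ha hab hν hμ in
lemma mu_ae_Ioo : ∀ᵐ x ∂μ, x ∈ Ioo a b := by
  apply mem_ae_iff.mpr
  show μ ((Ioo a b)ᶜ) = 0
  rw [hμ, Measure.smul_apply, Measure.restrict_apply (measurableSet_Ioo.compl)]
  have hsub : (Ioo a b)ᶜ ∩ Icc a b ⊆ {a, b} := by
    rintro x ⟨hx1, hx2, hx3⟩
    simp only [mem_compl_iff, mem_Ioo, not_and_or, not_lt] at hx1
    rcases hx1 with h | h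
    · exact Or.inl (le_antisymm h hx2)
    · exact Or.inr (le_antisymm hx3 h)
  have h0 : ν ({a, b} : Set ℝ) = 0 := by
    rw [hν]
    exact (withDensity_absolutelyContinuous volume _) ((Set.toFinite _).measure_zero volume)
  rw [measure_mono_null hsub h0, smul_zero]

include ha hab hν hμ in
lemma integrable_mu_of_continuous {g : ℝ → ℝ} (hg : Continuous g) : Integrable g μ := by
  rw [hμ]
  rw [integrable_smul_measure (ENNReal.inv_ne_zero.mpr (mass_ne_top ha hab hν))
    (ENNReal.inv_ne_top.mpr (mass_ne_zero ha hab hν))]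
  rw [hν, restrict_withDensity measurableSet_Icc]
  rw [integrable_withDensity_iff (by measurability)
    (Filter.Eventually.of_forall fun x => ENNReal.ofReal_lt_top)]
  have h1 : (fun x => g x * (ENNReal.ofReal ((1/2) * Real.exp (-|x|))).toReal)
      = fun x => g x * ((1/2) * Real.exp (-|x|)) := by
    funext x; rw [ENNReal.toReal_ofReal (by positivity)]
  rw [h1]
  apply ContinuousOn.integrableOn_compact isCompact_Icc
  exact (hg.mul (continuous_const.mul (continuous_exp.comp continuous_abs.neg))).continuousOn

include ha hab hν hμ in
lemma integrableOn_weight {g : ℝ → ℝ} (hg : Integrable g μ) :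
    IntegrableOn (fun x => Real.exp (-x) * g x) (Ioo a b) volume := by
  rw [hμ] at hg
  rw [integrable_smul_measure (ENNReal.inv_ne_zero.mpr (mass_ne_top ha hab hν))
    (ENNReal.inv_ne_top.mpr (mass_ne_zero ha hab hν))] at hg
  rw [hν, restrict_withDensity measurableSet_Icc] at hg
  rw [integrable_withDensity_iff (by measurability)
    (Filter.Eventually.of_forall fun x => ENNReal.ofReal_lt_top)] at hg
  have h1 : (fun x => g x * (ENNReal.ofReal ((1/2) * Real.exp (-|x|))).toReal)
      = fun x => g x * ((1/2) * Real.exp (-|x|)) := by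
    funext x; rw [ENNReal.toReal_ofReal (by positivity)]
  rw [h1] at hg
  have hg' : IntegrableOn (fun x => g x * ((1/2) * Real.exp (-|x|))) (Icc a b) volume := hg
  have hg2 : IntegrableOn (fun x => g x * ((1/2) * Real.exp (-|x|))) (Ioo a b) volume :=
    hg'.mono_set Ioo_subset_Icc_self
  have hg3 : IntegrableOn (fun x => g x * ((1/2) * Real.exp (-x))) (Ioo a b) volume := by
    apply hg2.congr
    filter_upwards [self_mem_ae_restrict measurableSet_Ioo] with x hx
    rw [abs_of_nonneg (by linarith [hx.1] : (0:ℝ) ≤ x)]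
  have h2 : (fun x => Real.exp (-x) * g x) = fun x => 2 * (g x * ((1/2) * Real.exp (-x))) := by
    funext x; ring
  rw [h2]
  exact hg3.const_mul 2

end setup



lemma var_le (μ : Measure ℝ) (F : ℝ → ℝ) (c : ℝ) : Var μ F ≤ ∫ x, (F x - c)^2 ∂μ := by
  apply ciInf_le
  refine ⟨0, ?_⟩
  rintro y ⟨d, rfl⟩
  exact integral_nonneg fun x => sq_nonneg _

lemma var_eq (μ : Measure ℝ) [IsProbabilityMeasure μ] (F : ℝ → ℝ)
    (hF : Integrable F μ) (hF2 : Integrable (fun x => (F x)^2) μ) :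
    Var μ F = (∫ x, (F x)^2 ∂μ) - (∫ x, F x ∂μ)^2 := by
  have hexp : ∀ c : ℝ, ∫ x, (F x - c)^2 ∂μ
      = (∫ x, (F x)^2 ∂μ) - 2*c*(∫ x, F x ∂μ) + c^2 := by
    intro c
    have h1 : (fun x => (F x - c)^2) = fun x => ((F x)^2 - (2*c)*(F x)) + c^2 :=
      funext fun x => by ring
    have hcm : Integrable (fun x => (2*c)*(F x)) μ := hF.const_mul (2*c)
    have hsub : Integrable (fun x => (F x)^2 - (2*c)*(F x)) μ := hF2.sub hcm
    rw [h1, integral_add hsub (integrable_const _), integral_sub hF2 hcm, MeasureTheory.integral_const_mul]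
    simp [measure_univ]
  unfold Var
  simp only [hexp]
  set Sv := ∫ x, (F x)^2 ∂μ
  set Iv := ∫ x, F x ∂μ
  apply le_antisymm
  · have hb : BddBelow (Set.range (fun c => Sv - 2*c*Iv + c^2)) := by
      refine ⟨Sv - Iv^2, ?_⟩
      rintro y ⟨d, rfl⟩
      show Sv - Iv^2 ≤ Sv - 2*d*Iv + d^2
      nlinarith [sq_nonneg (d - Iv)]
    calc (⨅ c : ℝ, Sv - 2*c*Iv + c^2) ≤ Sv - 2*Iv*Iv + Iv^2 := ciInf_le hb Iv
      _ = Sv - Iv^2 := by ring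
  · apply le_ciInf
    intro c
    nlinarith [sq_nonneg (c - Iv)]

noncomputable def om (a b : ℝ) : ℝ := Real.pi / (b - a)
noncomputable def lam (a b : ℝ) : ℝ := 1/4 + (om a b)^2
noncomputable def phi (a b : ℝ) (x : ℝ) : ℝ :=
  Real.exp (x/2) * (-(om a b) * Real.cos (om a b * (x - a)) + (1/2) * Real.sin (om a b * (x - a)))
noncomputable def phiD (a b : ℝ) (x : ℝ) : ℝ :=
  lam a b * Real.exp (x/2) * Real.sin (om a b * (x - a))
noncomputable def x0 (a b : ℝ) : ℝ := a + Real.arctan (2 * om a b) / om a b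
noncomputable def hh (a b : ℝ) (x : ℝ) : ℝ := phiD a b x / phi a b x

section eig
variable {a b : ℝ} (hab : a < b)

include hab

lemma om_pos : 0 < om a b := div_pos Real.pi_pos (by linarith)

lemma lam_pos : 0 < lam a b := by
  have := om_pos hab; unfold lam; positivity

lemma om_mul : om a b * (b - a) = Real.pi := by
  unfold om; exact div_mul_cancel₀ _ (sub_ne_zero.mpr (ne_of_gt hab))

lemma hasDerivAt_phi (x : ℝ) : HasDerivAt (phi a b) (phiD a b x) x := by
  have he : HasDerivAt (fun y : ℝ => Real.exp (y/2)) (Real.exp (x/2) * (1/2)) x := by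
    simpa using (((hasDerivAt_id x).div_const 2).exp)
  have hθ : HasDerivAt (fun y : ℝ => om a b * (y - a)) (om a b) x := by
    simpa using (((hasDerivAt_id x).sub_const a).const_mul (om a b))
  have hc : HasDerivAt (fun y : ℝ => Real.cos (om a b * (y - a)))
      (-Real.sin (om a b * (x - a)) * om a b) x := hθ.cos
  have hs : HasDerivAt (fun y : ℝ => Real.sin (om a b * (y - a)))
      (Real.cos (om a b * (x - a)) * om a b) x := hθ.sin
  have hg : HasDerivAt (fun y : ℝ => -(om a b) * Real.cos (om a b * (y - a))
      + (1/2) * Real.sin (om a b * (y - a)))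
      (-(om a b) * (-Real.sin (om a b * (x - a)) * om a b)
        + (1/2) * (Real.cos (om a b * (x - a)) * om a b)) x :=
    (hc.const_mul _).add (hs.const_mul _)
  have := he.mul hg
  have h2 : HasDerivAt (phi a b) _ x := this
  convert h2 using 1
  unfold phiD lam
  ring

lemma hasDerivAt_phiD (x : ℝ) :
    HasDerivAt (phiD a b) (phiD a b x - lam a b * phi a b x) x := by
  have he : HasDerivAt (fun y : ℝ => Real.exp (y/2)) (Real.exp (x/2) * (1/2)) x := by
    simpa using (((hasDerivAt_id x).div_const 2).exp)
  have hθ : HasDerivAt (fun y : ℝ => om a b * (y - a)) (om a b) x := by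
    simpa using (((hasDerivAt_id x).sub_const a).const_mul (om a b))
  have hs : HasDerivAt (fun y : ℝ => Real.sin (om a b * (y - a)))
      (Real.cos (om a b * (x - a)) * om a b) x := hθ.sin
  have h0 := ((he.mul hs).const_mul (lam a b))
  have hfe : (fun y => lam a b * (Real.exp (y/2) * Real.sin (om a b * (y - a)))) = phiD a b :=
    funext fun y => by unfold phiD; ring
  simp only [Pi.mul_apply] at h0
  rw [hfe] at h0
  refine h0.congr_deriv (Eq.symm ?_)
  unfold phiD phi
  ring

lemma hasDerivAt_hh {x : ℝ} (hx : phi a b x ≠ 0) :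
    HasDerivAt (hh a b) (hh a b x - lam a b - (hh a b x)^2) x := by
  have := (hasDerivAt_phiD hab x).div (hasDerivAt_phi hab x) hx
  refine this.congr_deriv (Eq.symm ?_)
  unfold hh
  field_simp

lemma phi_eq (x : ℝ) : phi a b x
    = Real.sqrt (lam a b) * (Real.exp (x/2)
      * Real.sin (om a b * (x - a) - Real.arctan (2 * om a b))) := by
  have hr : Real.sqrt (1 + (2 * om a b)^2) > 0 := Real.sqrt_pos.mpr (by positivity)
  have hr2 : (Real.sqrt (1 + (2 * om a b)^2))^2 = 1 + (2*om a b)^2 :=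
    Real.sq_sqrt (by positivity)
  have hsl : Real.sqrt (lam a b) = Real.sqrt (1 + (2 * om a b)^2) / 2 := by
    rw [show lam a b = (Real.sqrt (1 + (2 * om a b)^2) / 2)^2 by
      rw [div_pow, hr2]; unfold lam; ring]
    exact Real.sqrt_sq (by positivity)
  rw [Real.sin_sub, Real.sin_arctan, Real.cos_arctan, hsl]
  unfold phi
  field_simp
  ring

lemma x0_mem : x0 a b ∈ Ioo a b := by
  have hom := om_pos hab
  have h1 : 0 < Real.arctan (2 * om a b) := by
    have := Real.arctan_strictMono (show (0:ℝ) < 2 * om a b by positivity)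
    rwa [Real.arctan_zero] at this
  constructor
  · unfold x0; have : 0 < Real.arctan (2 * om a b) / om a b := div_pos h1 hom
    linarith
  · unfold x0
    have h2 : Real.arctan (2 * om a b) < Real.pi / 2 := Real.arctan_lt_pi_div_two _
    have h4 : Real.arctan (2 * om a b) < om a b * (b - a) := by
      rw [om_mul hab]; linarith [Real.pi_pos]
    have h5 : Real.arctan (2 * om a b) / om a b < b - a := by
      rw [div_lt_iff₀ hom]; linarith [h4]
    linarith

lemma theta_x0 : om a b * (x0 a b - a) = Real.arctan (2 * om a b) := by
  have hom := (om_pos hab).ne'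
  unfold x0; field_simp; ring

lemma phi_x0 : phi a b (x0 a b) = 0 := by
  rw [phi_eq hab, theta_x0 hab, sub_self, Real.sin_zero]
  ring

lemma phiD_nonneg {x : ℝ} (h1 : a ≤ x) (h2 : x ≤ b) : 0 ≤ phiD a b x := by
  have hom := om_pos hab
  have hl := lam_pos hab
  have hs : 0 ≤ Real.sin (om a b * (x - a)) := by
    apply Real.sin_nonneg_of_nonneg_of_le_pi
    · exact mul_nonneg hom.le (by linarith)
    · rw [← om_mul hab]
      apply mul_le_mul_of_nonneg_left (by linarith) hom.le
  unfold phiD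
  exact mul_nonneg (mul_nonneg hl.le (Real.exp_pos _).le) hs

lemma phiD_x0_pos : 0 < phiD a b (x0 a b) := by
  have hom := om_pos hab
  have hl := lam_pos hab
  have h1 : 0 < Real.arctan (2 * om a b) := by
    have := Real.arctan_strictMono (show (0:ℝ) < 2 * om a b by positivity)
    rwa [Real.arctan_zero] at this
  have h2 : Real.arctan (2 * om a b) < Real.pi := by
    linarith [Real.arctan_lt_pi_div_two (2 * om a b), Real.pi_pos]
  have hs : 0 < Real.sin (om a b * (x0 a b - a)) := by
    rw [theta_x0 hab]; exact Real.sin_pos_of_pos_of_lt_pi h1 h2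
  unfold phiD
  positivity

lemma phi_neg {x : ℝ} (h1 : a ≤ x) (h2 : x < x0 a b) : phi a b x < 0 := by
  have hom := om_pos hab
  have hl := lam_pos hab
  have harc : 0 < Real.arctan (2 * om a b) := by
    have := Real.arctan_strictMono (show (0:ℝ) < 2 * om a b by positivity)
    rwa [Real.arctan_zero] at this
  rw [phi_eq hab]
  have hψ1 : om a b * (x - a) - Real.arctan (2 * om a b) < 0 := by
    have := mul_lt_mul_of_pos_left (sub_lt_sub_right h2 a) hom
    rw [theta_x0 hab] at this
    linarith
  have hψ2 : -Real.pi < om a b * (x - a) - Real.arctan (2 * om a b) := by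
    have h3 : 0 ≤ om a b * (x - a) := mul_nonneg hom.le (by linarith)
    have h4 : Real.arctan (2 * om a b) < Real.pi / 2 := Real.arctan_lt_pi_div_two _
    linarith [Real.pi_pos]
  have hs : Real.sin (om a b * (x - a) - Real.arctan (2 * om a b)) < 0 :=
    Real.sin_neg_of_neg_of_neg_pi_lt hψ1 hψ2
  have hsq : 0 < Real.sqrt (lam a b) := Real.sqrt_pos.mpr hl
  have he : 0 < Real.exp (x/2) := Real.exp_pos _
  exact mul_neg_of_pos_of_neg hsq (mul_neg_of_pos_of_neg he hs)

lemma phi_pos {x : ℝ} (h1 : x0 a b < x) (h2 : x ≤ b) : 0 < phi a b x := by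
  have hom := om_pos hab
  have hl := lam_pos hab
  have harc : 0 < Real.arctan (2 * om a b) := by
    have := Real.arctan_strictMono (show (0:ℝ) < 2 * om a b by positivity)
    rwa [Real.arctan_zero] at this
  rw [phi_eq hab]
  have hψ1 : 0 < om a b * (x - a) - Real.arctan (2 * om a b) := by
    have := mul_lt_mul_of_pos_left (sub_lt_sub_right h1 a) hom
    rw [theta_x0 hab] at this
    linarith
  have hψ2 : om a b * (x - a) - Real.arctan (2 * om a b) < Real.pi := by
    have h3 : om a b * (x - a) ≤ Real.pi := by
      rw [← om_mul hab]
      apply mul_le_mul_of_nonneg_left (by linarith) hom.le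
    linarith
  have hs : 0 < Real.sin (om a b * (x - a) - Real.arctan (2 * om a b)) :=
    Real.sin_pos_of_pos_of_lt_pi hψ1 hψ2
  have hsq : 0 < Real.sqrt (lam a b) := Real.sqrt_pos.mpr hl
  have he : 0 < Real.exp (x/2) := Real.exp_pos _
  positivity

lemma phi_ne_left {x : ℝ} (h1 : a ≤ x) (h2 : x < x0 a b) : phi a b x ≠ 0 :=
  (phi_neg hab h1 h2).ne

lemma phi_ne_right {x : ℝ} (h1 : x0 a b < x) (h2 : x ≤ b) : phi a b x ≠ 0 :=
  (phi_pos hab h1 h2).ne'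

omit hab in
lemma continuous_phi : Continuous (phi a b) := by
  unfold phi; continuity

omit hab in
lemma continuous_phiD : Continuous (phiD a b) := by
  unfold phiD; continuity

end eig




section intg
variable {a b : ℝ} (hab : a < b)

lemma exp_half_sq (x : ℝ) : Real.exp (-x) * (Real.exp (x/2))^2 = 1 := by
  rw [sq, ← Real.exp_add, ← Real.exp_add, show -x + (x/2 + x/2) = 0 by ring, Real.exp_zero]

include hab in
lemma intg1 : ∫ x in a..b, Real.exp (-x) * phi a b x = 0 := by
  have hFTC : ∀ x ∈ uIcc a b, HasDerivAt (fun y => -(Real.exp (-(y/2)) * Real.sin (om a b * (y - a))))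
      (Real.exp (-x) * phi a b x) x := by
    intro x _
    have he : HasDerivAt (fun y : ℝ => Real.exp (-(y/2))) (Real.exp (-(x/2)) * (-(1/2))) x := by
      have h1 : HasDerivAt (fun y : ℝ => -(y/2)) (-(1/2)) x := by
        simpa [Pi.neg_def] using ((hasDerivAt_id x).div_const 2).neg
      exact h1.exp
    have hθ : HasDerivAt (fun y : ℝ => om a b * (y - a)) (om a b) x := by
      simpa using (((hasDerivAt_id x).sub_const a).const_mul (om a b))
    have := (he.mul hθ.sin).neg
    refine this.congr_deriv (Eq.symm ?_)
    unfold phi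
    have h2 : Real.exp (-x) * Real.exp (x/2) = Real.exp (-(x/2)) := by
      rw [← Real.exp_add, show -x + x/2 = -(x/2) by ring]
    calc Real.exp (-x) * (Real.exp (x/2) * (-(om a b) * Real.cos (om a b * (x - a))
          + (1/2) * Real.sin (om a b * (x - a))))
        = (Real.exp (-x) * Real.exp (x/2)) * (-(om a b) * Real.cos (om a b * (x - a))
          + (1/2) * Real.sin (om a b * (x - a))) := by ring
      _ = _ := by rw [h2]; ring
  rw [intervalIntegral.integral_eq_sub_of_hasDerivAt hFTC]
  · have h1 : om a b * (b - a) = Real.pi := om_mul hab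
    have h2 : om a b * (a - a) = 0 := by ring
    rw [h1, h2, Real.sin_pi, Real.sin_zero]
    ring
  · apply Continuous.intervalIntegrable
    have : Continuous (phi a b) := by unfold phi; continuity
    exact (continuous_exp.comp continuous_neg).mul this

include hab in
lemma intg2 : ∫ x in a..b, Real.exp (-x) * (phi a b x)^2 = lam a b * (b - a) / 2 := by
  have hom := om_pos hab
  have hpt : ∀ x : ℝ, Real.exp (-x) * (phi a b x)^2
      = (-(om a b) * Real.cos (om a b * (x - a)) + (1/2) * Real.sin (om a b * (x - a)))^2 := by
    intro x
    unfold phi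
    rw [mul_pow]
    calc Real.exp (-x) * ((Real.exp (x/2))^2 * (-(om a b) * Real.cos (om a b * (x - a))
          + (1/2) * Real.sin (om a b * (x - a)))^2)
        = (Real.exp (-x) * (Real.exp (x/2))^2) * (-(om a b) * Real.cos (om a b * (x - a))
          + (1/2) * Real.sin (om a b * (x - a)))^2 := by ring
      _ = _ := by rw [exp_half_sq]; ring
  have hFTC : ∀ x ∈ uIcc a b, HasDerivAt (fun y =>
      ((om a b)^2/2 + 1/8) * (y - a) + ((((om a b)^2/2 - 1/8)/(2 * om a b)) * Real.sin (2*(om a b * (y - a)))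
        + (1/4) * Real.cos (2*(om a b * (y - a)))))
      (Real.exp (-x) * (phi a b x)^2) x := by
    intro x _
    have hθ : HasDerivAt (fun y : ℝ => 2*(om a b * (y - a))) (2 * om a b) x := by
      simpa using ((((hasDerivAt_id x).sub_const a).const_mul (om a b)).const_mul 2)
    have h1 : HasDerivAt (fun y : ℝ => ((om a b)^2/2 + 1/8) * (y - a)) ((om a b)^2/2 + 1/8) x := by
      simpa using (((hasDerivAt_id x).sub_const a).const_mul ((om a b)^2/2 + 1/8))
    have := (h1.add ((hθ.sin.const_mul (((om a b)^2/2 - 1/8)/(2 * om a b))).add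
      (hθ.cos.const_mul (1/4))))
    refine this.congr_deriv (Eq.symm ?_)
    rw [hpt x, Real.sin_two_mul, Real.cos_two_mul]
    have homne : om a b ≠ 0 := hom.ne'
    field_simp
    ring_nf
    linear_combination (32) * (Real.sin_sq_add_cos_sq (om a b * x - om a b * a))
  rw [intervalIntegral.integral_eq_sub_of_hasDerivAt hFTC]
  · rw [show 2*(om a b * (b - a)) = 2 * Real.pi by rw [om_mul hab],
      show 2*(om a b * (a - a)) = 0 by ring,
      Real.sin_two_pi, Real.cos_two_pi, Real.sin_zero, Real.cos_zero]
    unfold lam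
    ring
  · apply Continuous.intervalIntegrable
    have hc : Continuous (phi a b) := by unfold phi; continuity
    exact (continuous_exp.comp continuous_neg).mul (hc.pow 2)

include hab in
lemma intg3 : ∫ x in a..b, Real.exp (-x) * (phiD a b x)^2 = (lam a b)^2 * (b - a) / 2 := by
  have hom := om_pos hab
  have hpt : ∀ x : ℝ, Real.exp (-x) * (phiD a b x)^2
      = (lam a b)^2 * (Real.sin (om a b * (x - a)))^2 := by
    intro x
    unfold phiD
    calc Real.exp (-x) * (lam a b * Real.exp (x/2) * Real.sin (om a b * (x - a)))^2
        = (Real.exp (-x) * (Real.exp (x/2))^2) * ((lam a b)^2 * (Real.sin (om a b * (x - a)))^2) := by ring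
      _ = _ := by rw [exp_half_sq]; ring
  have hFTC : ∀ x ∈ uIcc a b, HasDerivAt (fun y =>
      (lam a b)^2 * ((y - a)/2 - Real.sin (2*(om a b * (y - a)))/(4 * om a b)))
      (Real.exp (-x) * (phiD a b x)^2) x := by
    intro x _
    have hθ : HasDerivAt (fun y : ℝ => 2*(om a b * (y - a))) (2 * om a b) x := by
      simpa using ((((hasDerivAt_id x).sub_const a).const_mul (om a b)).const_mul 2)
    have h1 : HasDerivAt (fun y : ℝ => (y - a)/2) (1/2) x := by
      simpa using (((hasDerivAt_id x).sub_const a).div_const 2)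
    have := ((h1.sub (hθ.sin.div_const (4 * om a b))).const_mul ((lam a b)^2))
    refine this.congr_deriv (Eq.symm ?_)
    rw [hpt x, Real.cos_two_mul]
    have homne : om a b ≠ 0 := hom.ne'
    field_simp
    ring_nf
    linear_combination (8 * lam a b ^2) * (Real.sin_sq_add_cos_sq (om a b * x - om a b * a))
  rw [intervalIntegral.integral_eq_sub_of_hasDerivAt hFTC]
  · rw [show 2*(om a b * (b - a)) = 2 * Real.pi by rw [om_mul hab],
      show 2*(om a b * (a - a)) = 0 by ring,
      Real.sin_two_pi, Real.sin_zero]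
    ring
  · apply Continuous.intervalIntegrable
    have hc : Continuous (phiD a b) := by unfold phiD; continuity
    exact (continuous_exp.comp continuous_neg).mul (hc.pow 2)
end intg







noncomputable def XX (G' : ℝ → ℝ) (x : ℝ) : ℝ := Real.exp (-x) * (G' x)^2
noncomputable def YY (a b : ℝ) (G : ℝ → ℝ) (x : ℝ) : ℝ := lam a b * (Real.exp (-x) * (G x)^2)
noncomputable def ZZ (a b : ℝ) (G G' : ℝ → ℝ) (x : ℝ) : ℝ :=
  (G' x - hh a b x * G x)^2 * Real.exp (-x)
noncomputable def Psi (a b : ℝ) (G : ℝ → ℝ) (x : ℝ) : ℝ :=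
  hh a b x * (G x)^2 * Real.exp (-x)

lemma continuousOn_hh {a b : ℝ} {s : Set ℝ} (hne : ∀ x ∈ s, phi a b x ≠ 0) :
    ContinuousOn (hh a b) s := by
  have : ContinuousOn (fun x => phiD a b x / phi a b x) s :=
    ContinuousOn.div (continuous_phiD.continuousOn) (continuous_phi.continuousOn) hne
  exact this

section core
variable {a b : ℝ} (hab : a < b) {G G' : ℝ → ℝ}
  (hG : ∀ x ∈ Ioo a b, HasDerivAt G (G' x) x)
  (hmeas : AEMeasurable G' (volume.restrict (Ioo a b)))
  (hInt2 : IntegrableOn (fun x => Real.exp (-x) * (G' x)^2) (Ioo a b) volume)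

include hab hG hmeas hInt2 in
lemma ftc_ric {s t : ℝ} (has : a < s) (hst : s ≤ t) (htb : t < b)
    (hne : ∀ x ∈ Icc s t, phi a b x ≠ 0) :
    lam a b * ∫ x in Ioc s t, Real.exp (-x) * (G x)^2 ≤
      (∫ x in Ioc s t, Real.exp (-x) * (G' x)^2) + Psi a b G s - Psi a b G t := by
  have hsub : Icc s t ⊆ Ioo a b := fun x hx => ⟨lt_of_lt_of_le has hx.1, lt_of_le_of_lt hx.2 htb⟩
  have hsub2 : Ioc s t ⊆ Ioo a b := Ioc_subset_Icc_self.trans hsub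
  have hGc : ContinuousOn G (Icc s t) := fun x hx =>
    ((hG x (hsub hx)).continuousAt).continuousWithinAt
  -- derivative of Psi
  have hPsiD : ∀ x ∈ Icc s t,
      HasDerivAt (Psi a b G) (XX G' x - YY a b G x - ZZ a b G G' x) x := by
    intro x hx
    have Hh := hasDerivAt_hh hab (hne x hx)
    have HG := hG x (hsub hx)
    have Hw : HasDerivAt (fun y : ℝ => Real.exp (-y)) (-Real.exp (-x)) x := by
      simpa using (hasDerivAt_neg x).exp
    have H := (Hh.mul (HG.pow 2)).mul Hw
    have hfe : (fun y => hh a b y * G y ^ 2 * Real.exp (-y)) = Psi a b G := rfl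
    refine H.congr_deriv (Eq.symm ?_)
    unfold XX YY ZZ
    push_cast [Pi.pow_apply, Pi.mul_apply]
    ring
  -- bounds for continuous pieces
  obtain ⟨c1, hc1⟩ := isCompact_Icc.exists_bound_of_continuousOn (continuousOn_hh hne)
  obtain ⟨c2, hc2⟩ := isCompact_Icc.exists_bound_of_continuousOn hGc
  simp only [Real.norm_eq_abs] at hc1 hc2
  have hXint : IntegrableOn (XX G') (Icc s t) volume := hInt2.mono_set hsub
  -- G'^2 integrable on Icc s t (not needed separately)
  -- dominator for DD
  set K2 : ℝ := lam a b * c2^2 + 2*c1^2*c2^2 with hK2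
  have hDbound : ∀ x ∈ Icc s t,
      ‖XX G' x - YY a b G x - ZZ a b G G' x‖ ≤ 3 * XX G' x + K2 * Real.exp (-x) := by
    intro x hx
    have e0 : (0:ℝ) < Real.exp (-x) := Real.exp_pos _
    have h1 : (hh a b x)^2 ≤ c1^2 := by
      have := hc1 x hx; nlinarith [abs_nonneg (hh a b x), sq_abs (hh a b x)]
    have h2 : (G x)^2 ≤ c2^2 := by
      have := hc2 x hx; nlinarith [abs_nonneg (G x), sq_abs (G x)]
    have h3 : (hh a b x * G x)^2 ≤ c1^2 * c2^2 := by
      have := mul_le_mul h1 h2 (sq_nonneg _) (by nlinarith [abs_nonneg (hh a b x), hc1 x hx, sq_abs (hh a b x)])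
      nlinarith
    have hZb : ZZ a b G G' x ≤ (2*(G' x)^2 + 2*(c1^2*c2^2)) * Real.exp (-x) := by
      unfold ZZ
      have : (G' x - hh a b x * G x)^2 ≤ 2*(G' x)^2 + 2*(c1^2*c2^2) := by
        nlinarith [sq_nonneg (G' x + hh a b x * G x)]
      nlinarith
    have hZ0 : 0 ≤ ZZ a b G G' x := by unfold ZZ; positivity
    have hY0 : 0 ≤ YY a b G x := by
      unfold YY lam
      have : 0 < om a b ∨ True := Or.inr trivial
      positivity
    have hl0 : 0 ≤ lam a b := by unfold lam; positivity
    have hYb : YY a b G x ≤ lam a b * c2^2 * Real.exp (-x) := by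
      unfold YY
      have := mul_le_mul_of_nonneg_left h2 (mul_nonneg hl0 e0.le)
      nlinarith [this]
    have hX0 : 0 ≤ XX G' x := by unfold XX; positivity
    rw [Real.norm_eq_abs, abs_le]
    constructor
    · unfold XX at *; nlinarith
    · unfold XX at *; nlinarith
  have hdom : IntegrableOn (fun x => 3 * XX G' x + K2 * Real.exp (-x)) (Icc s t) volume := by
    apply Integrable.add
    · exact hXint.const_mul 3
    · exact ((continuous_const.mul (continuous_exp.comp continuous_neg)).continuousOn).integrableOn_compact isCompact_Icc
  -- a.e. measurability of DD on Icc s t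
  have hmG' : AEMeasurable G' (volume.restrict (Icc s t)) :=
    hmeas.mono_measure (Measure.restrict_mono hsub le_rfl)
  have hmhh : AEMeasurable (hh a b) (volume.restrict (Icc s t)) :=
    (continuousOn_hh hne).aemeasurable measurableSet_Icc
  have hmG : AEMeasurable G (volume.restrict (Icc s t)) :=
    hGc.aemeasurable measurableSet_Icc
  have hmexp : AEMeasurable (fun x : ℝ => Real.exp (-x)) (volume.restrict (Icc s t)) :=
    (continuous_exp.comp continuous_neg).aemeasurable
  have hmG'2 : AEMeasurable (fun x => (G' x)^2) (volume.restrict (Icc s t)) :=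
    (hmG'.mul hmG').congr (Filter.Eventually.of_forall fun x => (pow_two (G' x)).symm)
  have hmG2 : AEMeasurable (fun x => (G x)^2) (volume.restrict (Icc s t)) :=
    (hmG.mul hmG).congr (Filter.Eventually.of_forall fun x => (pow_two (G x)).symm)
  have hmW : AEMeasurable (fun x => (G' x - hh a b x * G x)^2) (volume.restrict (Icc s t)) :=
    ((hmG'.sub (hmhh.mul hmG)).mul (hmG'.sub (hmhh.mul hmG))).congr
      (Filter.Eventually.of_forall fun x => (pow_two _).symm)
  have hmD : AEMeasurable (fun x => XX G' x - YY a b G x - ZZ a b G G' x)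
      (volume.restrict (Icc s t)) := by
    unfold XX YY ZZ
    exact ((hmexp.mul hmG'2).sub (aemeasurable_const.mul (hmexp.mul hmG2))).sub
      (hmW.mul hmexp)
  have hDint : IntegrableOn (fun x => XX G' x - YY a b G x - ZZ a b G G' x) (Icc s t) volume := by
    apply Integrable.mono' hdom hmD.aestronglyMeasurable
    rw [ae_restrict_iff' measurableSet_Icc]
    exact Filter.Eventually.of_forall hDbound
  have hDii : IntervalIntegrable (fun x => XX G' x - YY a b G x - ZZ a b G G' x) volume s t := by
    rw [intervalIntegrable_iff_integrableOn_Icc_of_le hst]; exact hDint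
  -- FTC
  have key : ∫ y in s..t, (XX G' y - YY a b G y - ZZ a b G G' y)
      = Psi a b G t - Psi a b G s := by
    apply intervalIntegral.integral_eq_sub_of_hasDerivAt
    · intro x hx
      exact hPsiD x (by rwa [uIcc_of_le hst] at hx)
    · exact hDii
  have hXii : IntervalIntegrable (XX G') volume s t := by
    rw [intervalIntegrable_iff_integrableOn_Icc_of_le hst]; exact hXint
  have hYii : IntervalIntegrable (YY a b G) volume s t := by
    apply ContinuousOn.intervalIntegrable
    rw [uIcc_of_le hst]
    exact continuous_const.continuousOn.mul
      (((continuous_exp.comp continuous_neg).continuousOn).mul (hGc.pow 2))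
  have hZii : IntervalIntegrable (ZZ a b G G') volume s t := by
    have : ZZ a b G G' = fun x => XX G' x - YY a b G x - (XX G' x - YY a b G x - ZZ a b G G' x) := by
      funext x; ring
    rw [this]
    exact (hXii.sub hYii).sub hDii
  have hsplit : ∫ y in s..t, (XX G' y - YY a b G y - ZZ a b G G' y)
      = (∫ y in s..t, XX G' y) - (∫ y in s..t, YY a b G y) - ∫ y in s..t, ZZ a b G G' y := by
    rw [intervalIntegral.integral_sub (hXii.sub hYii) hZii,
      intervalIntegral.integral_sub hXii hYii]
  have hZnn : 0 ≤ ∫ y in s..t, ZZ a b G G' y := by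
    apply intervalIntegral.integral_nonneg hst
    intro u hu; unfold ZZ; positivity
  have hYeq : ∫ y in s..t, YY a b G y = lam a b * ∫ y in s..t, Real.exp (-y) * (G y)^2 := by
    unfold YY; exact intervalIntegral.integral_const_mul _ _
  have h1 : ∫ y in s..t, XX G' y = ∫ x in Ioc s t, Real.exp (-x) * (G' x)^2 := by
    rw [intervalIntegral.integral_of_le hst]; rfl
  have h2 : ∫ y in s..t, Real.exp (-y) * (G y)^2 = ∫ x in Ioc s t, Real.exp (-x) * (G x)^2 := by
    rw [intervalIntegral.integral_of_le hst]
  rw [hsplit, hYeq, h1, h2] at key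
  linarith


lemma d_tendsto (c : ℝ) : Tendsto (fun n : ℕ => c / (n + 2)) atTop (𝓝 0) := by
  have h1 : Tendsto (fun n : ℕ => ((n:ℝ) + 2)) atTop atTop := by
    apply Filter.tendsto_atTop_add_const_right
    exact tendsto_natCast_atTop_atTop
  simpa using (tendsto_const_nhds (x := c)).div_atTop h1

-- limit of Psi near x0 from within punctured nbhd
lemma psi_tendsto {a b : ℝ} (hab : a < b) {G G' : ℝ → ℝ}
    (hG : ∀ x ∈ Ioo a b, HasDerivAt G (G' x) x) (hGx0 : G (x0 a b) = 0) :
    Tendsto (fun t => (phiD a b t * Real.exp (-t)) * ((G t - G (x0 a b))/(t - x0 a b))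
      * (G t) * ((t - x0 a b)/(phi a b t - phi a b (x0 a b))))
      (𝓝[≠] (x0 a b)) (𝓝 0) := by
  have hx0 := x0_mem hab
  have t1 : Tendsto (fun t => phiD a b t * Real.exp (-t)) (𝓝 (x0 a b))
      (𝓝 (phiD a b (x0 a b) * Real.exp (-(x0 a b)))) :=
    (continuous_phiD.mul (continuous_exp.comp continuous_neg)).tendsto _
  have t2 : Tendsto (fun t => (G t - G (x0 a b))/(t - x0 a b)) (𝓝[≠] (x0 a b))
      (𝓝 (G' (x0 a b))) := by
    have := hasDerivAt_iff_tendsto_slope.mp (hG _ hx0)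
    apply this.congr
    intro t
    rw [slope_def_field]
  have t3 : Tendsto G (𝓝 (x0 a b)) (𝓝 0) := by
    have := (hG _ hx0).continuousAt.tendsto
    rwa [hGx0] at this
  have t4 : Tendsto (fun t => (t - x0 a b)/(phi a b t - phi a b (x0 a b)))
      (𝓝[≠] (x0 a b)) (𝓝 ((phiD a b (x0 a b))⁻¹)) := by
    have hsl := hasDerivAt_iff_tendsto_slope.mp (hasDerivAt_phi hab (x0 a b))
    have := hsl.inv₀ (phiD_x0_pos hab).ne'
    apply this.congr
    intro t
    rw [slope_def_field, inv_div]
  have := (((t1.mono_left nhdsWithin_le_nhds).mul t2).mul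
    (t3.mono_left nhdsWithin_le_nhds)).mul t4
  have hz : phiD a b (x0 a b) * Real.exp (-(x0 a b)) * G' (x0 a b) * 0
      * (phiD a b (x0 a b))⁻¹ = 0 := by ring
  rwa [hz] at this

include hab hG hmeas hInt2 in
lemma half_left (hGx0 : G (x0 a b) = 0)
    (hInt1 : IntegrableOn (fun x => Real.exp (-x) * (G x)^2) (Ioo a b) volume) :
    lam a b * ∫ x in Ioo a (x0 a b), Real.exp (-x) * (G x)^2 ≤
      ∫ x in Ioo a (x0 a b), Real.exp (-x) * (G' x)^2 := by
  have hx0 := x0_mem hab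
  set c := x0 a b with hc
  have hca : 0 < c - a := by linarith [hx0.1]
  set d : ℕ → ℝ := fun n => (c - a)/(n + 2) with hd
  have hd0 : ∀ n : ℕ, 0 < d n := fun n => div_pos hca (by positivity)
  have hdle : ∀ n : ℕ, d n ≤ (c - a)/2 := fun n => by
    apply div_le_div_of_nonneg_left hca.le (by norm_num) (by push_cast; linarith)
  have hdmono : ∀ m n : ℕ, m ≤ n → d n ≤ d m := fun m n hmn => by
    have : (m:ℝ) ≤ (n:ℝ) := Nat.cast_le.mpr hmn
    apply div_le_div_of_nonneg_left hca.le (by positivity) (by linarith)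
  set sn : ℕ → ℝ := fun n => a + d n with hsn
  set tn : ℕ → ℝ := fun n => c - d n with htn
  have hsneq : ∀ n, sn n = a + d n := fun _ => rfl
  have htneq : ∀ n, tn n = c - d n := fun _ => rfl
  have hs_gt : ∀ n, a < sn n := fun n => by rw [hsneq n]; linarith [hd0 n]
  have ht_lt : ∀ n, tn n < c := fun n => by rw [htneq n]; linarith [hd0 n]
  have hst : ∀ n, sn n ≤ tn n := fun n => by
    rw [hsneq n, htneq n]; linarith [hdle n]
  have htb : ∀ n, tn n < b := fun n => lt_trans (ht_lt n) hx0.2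
  have hsubL : ∀ n, Ioc (sn n) (tn n) ⊆ Ioo a c := fun n x hx =>
    ⟨lt_trans (hs_gt n) hx.1, lt_of_le_of_lt hx.2 (ht_lt n)⟩
  have hIoosub : Ioo a c ⊆ Ioo a b := Ioo_subset_Ioo le_rfl hx0.2.le
  -- step bound for each n
  have step : ∀ n, lam a b * ∫ x in Ioc (sn n) (tn n), Real.exp (-x) * (G x)^2 ≤
      (∫ x in Ioo a c, Real.exp (-x) * (G' x)^2) - Psi a b G (tn n) := by
    intro n
    have hne : ∀ x ∈ Icc (sn n) (tn n), phi a b x ≠ 0 := fun x hx =>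
      (phi_neg hab (by linarith [hs_gt n, hx.1]) (lt_of_le_of_lt hx.2 (ht_lt n))).ne
    have hb1 := ftc_ric hab hG hmeas hInt2 (hs_gt n) (hst n) (htb n) hne
    have hPsis : Psi a b G (sn n) ≤ 0 := by
      have hphin : phi a b (sn n) < 0 := phi_neg hab (le_of_lt (hs_gt n)) (by
        have := hst n; have := ht_lt n; linarith)
      have hphiDn : 0 ≤ phiD a b (sn n) := phiD_nonneg hab (le_of_lt (hs_gt n))
        (by linarith [hst n, htb n])
      have hhle : hh a b (sn n) ≤ 0 := div_nonpos_iff.mpr (Or.inl ⟨hphiDn, hphin.le⟩)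
      unfold Psi
      have h1 : hh a b (sn n) * (G (sn n))^2 ≤ 0 :=
        mul_nonpos_iff.mpr (Or.inr ⟨hhle, sq_nonneg _⟩)
      exact mul_nonpos_iff.mpr (Or.inr ⟨h1, (Real.exp_pos _).le⟩)
    have hXmono : (∫ x in Ioc (sn n) (tn n), Real.exp (-x) * (G' x)^2) ≤
        ∫ x in Ioo a c, Real.exp (-x) * (G' x)^2 := by
      apply setIntegral_mono_set (hInt2.mono_set hIoosub)
      · filter_upwards with x; positivity
      · exact HasSubset.Subset.eventuallyLE (hsubL n)
    linarith
  -- monotone convergence of LHS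
  have hmonoSet : Monotone (fun n => Ioc (sn n) (tn n)) := by
    intro m n hmn
    apply Ioc_subset_Ioc
    · rw [hsneq m, hsneq n]; linarith [hdmono m n hmn]
    · rw [htneq m, htneq n]; linarith [hdmono m n hmn]
  have hUnion : (⋃ n, Ioc (sn n) (tn n)) = Ioo a c := by
    ext x
    simp only [mem_iUnion, mem_Ioc, mem_Ioo]
    constructor
    · rintro ⟨n, h1, h2⟩
      exact ⟨lt_trans (hs_gt n) h1, lt_of_le_of_lt h2 (ht_lt n)⟩
    · rintro ⟨hxa, hxc⟩
      set ε : ℝ := min (x - a) (c - x) with hε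
      have hε0 : 0 < ε := lt_min (by linarith) (by linarith)
      obtain ⟨n, hn⟩ := exists_nat_one_div_lt (show (0:ℝ) < ε/(c - a) from div_pos hε0 hca)
      have hlt : d n < ε := by
        have h2 := (div_lt_div_iff₀ (by positivity) hca).mp hn
        show (c - a)/((n:ℝ)+2) < ε
        rw [div_lt_iff₀ (by positivity)]
        nlinarith [hε0]
      refine ⟨n, ?_, ?_⟩
      · have : ε ≤ x - a := min_le_left _ _
        rw [hsneq n]; linarith
      · have : ε ≤ c - x := min_le_right _ _
        rw [htneq n]; linarith
  have hLHS : Tendsto (fun n => lam a b * ∫ x in Ioc (sn n) (tn n), Real.exp (-x) * (G x)^2)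
      atTop (𝓝 (lam a b * ∫ x in Ioo a c, Real.exp (-x) * (G x)^2)) := by
    apply Tendsto.const_mul
    have := tendsto_setIntegral_of_monotone (fun n => measurableSet_Ioc) hmonoSet
      (by rw [hUnion]; exact hInt1.mono_set hIoosub)
    rwa [hUnion] at this
  -- Psi (tn n) → 0
  have htn_tendsto : Tendsto tn atTop (𝓝[≠] c) := by
    rw [tendsto_nhdsWithin_iff]
    constructor
    · have : Tendsto (fun n : ℕ => c - d n) atTop (𝓝 (c - 0)) :=
        (tendsto_const_nhds).sub (d_tendsto (c - a))
      simpa using this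
    · filter_upwards with n
      exact (ht_lt n).ne
  have hPsiEq : ∀ n, Psi a b G (tn n) = (phiD a b (tn n) * Real.exp (-(tn n)))
      * ((G (tn n) - G c)/(tn n - c)) * (G (tn n))
      * ((tn n - c)/(phi a b (tn n) - phi a b c)) := by
    intro n
    have h1 : tn n - c ≠ 0 := by have := ht_lt n; intro h; linarith [sub_eq_zero.mp h]
    have h2 : phi a b (tn n) ≠ 0 := (phi_neg hab (by
        have := hs_gt n; have := hst n; linarith) (ht_lt n)).ne
    have hphic : phi a b c = 0 := phi_x0 hab
    rw [hGx0, hphic]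
    unfold Psi hh
    field_simp
    ring
  have hPsiTend : Tendsto (fun n => Psi a b G (tn n)) atTop (𝓝 0) := by
    have := (psi_tendsto hab hG hGx0).comp htn_tendsto
    apply this.congr
    intro n
    simp only [Function.comp]
    rw [← hPsiEq n]
  have hRHS : Tendsto (fun n => (∫ x in Ioo a c, Real.exp (-x) * (G' x)^2) - Psi a b G (tn n))
      atTop (𝓝 ((∫ x in Ioo a c, Real.exp (-x) * (G' x)^2) - 0)) :=
    tendsto_const_nhds.sub hPsiTend
  have := le_of_tendsto_of_tendsto' hLHS hRHS step
  simpa using this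


include hab hG hmeas hInt2 in
lemma half_right (hGx0 : G (x0 a b) = 0)
    (hInt1 : IntegrableOn (fun x => Real.exp (-x) * (G x)^2) (Ioo a b) volume) :
    lam a b * ∫ x in Ioo (x0 a b) b, Real.exp (-x) * (G x)^2 ≤
      ∫ x in Ioo (x0 a b) b, Real.exp (-x) * (G' x)^2 := by
  have hx0 := x0_mem hab
  set c := x0 a b with hc
  have hbc : 0 < b - c := by linarith [hx0.2]
  set d : ℕ → ℝ := fun n => (b - c)/(n + 2) with hd
  have hd0 : ∀ n : ℕ, 0 < d n := fun n => div_pos hbc (by positivity)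
  have hdle : ∀ n : ℕ, d n ≤ (b - c)/2 := fun n => by
    apply div_le_div_of_nonneg_left hbc.le (by norm_num) (by push_cast; linarith)
  have hdmono : ∀ m n : ℕ, m ≤ n → d n ≤ d m := fun m n hmn => by
    have : (m:ℝ) ≤ (n:ℝ) := Nat.cast_le.mpr hmn
    apply div_le_div_of_nonneg_left hbc.le (by positivity) (by linarith)
  set sn : ℕ → ℝ := fun n => c + d n with hsn
  set tn : ℕ → ℝ := fun n => b - d n with htn
  have hsneq : ∀ n, sn n = c + d n := fun _ => rfl
  have htneq : ∀ n, tn n = b - d n := fun _ => rfl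
  have hs_gt : ∀ n, c < sn n := fun n => by rw [hsneq n]; linarith [hd0 n]
  have ht_lt : ∀ n, tn n < b := fun n => by rw [htneq n]; linarith [hd0 n]
  have hst : ∀ n, sn n ≤ tn n := fun n => by
    rw [hsneq n, htneq n]; linarith [hdle n]
  have hsa : ∀ n, a < sn n := fun n => lt_trans hx0.1 (hs_gt n)
  have hsubL : ∀ n, Ioc (sn n) (tn n) ⊆ Ioo c b := fun n x hx =>
    ⟨lt_trans (hs_gt n) hx.1, lt_of_le_of_lt hx.2 (ht_lt n)⟩
  have hIoosub : Ioo c b ⊆ Ioo a b := Ioo_subset_Ioo hx0.1.le le_rfl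
  have step : ∀ n, lam a b * ∫ x in Ioc (sn n) (tn n), Real.exp (-x) * (G x)^2 ≤
      (∫ x in Ioo c b, Real.exp (-x) * (G' x)^2) + Psi a b G (sn n) := by
    intro n
    have hne : ∀ x ∈ Icc (sn n) (tn n), phi a b x ≠ 0 := fun x hx =>
      (phi_pos hab (lt_of_lt_of_le (hs_gt n) hx.1) (le_trans hx.2 (ht_lt n).le)).ne'
    have hb1 := ftc_ric hab hG hmeas hInt2 (hsa n) (hst n) (ht_lt n) hne
    have hPsit : 0 ≤ Psi a b G (tn n) := by
      have hphin : 0 < phi a b (tn n) := phi_pos hab (lt_of_lt_of_le (hs_gt n) (hst n))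
        (ht_lt n).le
      have hphiDn : 0 ≤ phiD a b (tn n) := phiD_nonneg hab
        (by linarith [hsa n, hst n]) (ht_lt n).le
      have hhge : 0 ≤ hh a b (tn n) := div_nonneg hphiDn hphin.le
      unfold Psi
      positivity
    have hXmono : (∫ x in Ioc (sn n) (tn n), Real.exp (-x) * (G' x)^2) ≤
        ∫ x in Ioo c b, Real.exp (-x) * (G' x)^2 := by
      apply setIntegral_mono_set (hInt2.mono_set hIoosub)
      · filter_upwards with x; positivity
      · exact HasSubset.Subset.eventuallyLE (hsubL n)
    linarith
  have hmonoSet : Monotone (fun n => Ioc (sn n) (tn n)) := by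
    intro m n hmn
    apply Ioc_subset_Ioc
    · rw [hsneq m, hsneq n]; linarith [hdmono m n hmn]
    · rw [htneq m, htneq n]; linarith [hdmono m n hmn]
  have hUnion : (⋃ n, Ioc (sn n) (tn n)) = Ioo c b := by
    ext x
    simp only [mem_iUnion, mem_Ioc, mem_Ioo]
    constructor
    · rintro ⟨n, h1, h2⟩
      exact ⟨lt_trans (hs_gt n) h1, lt_of_le_of_lt h2 (ht_lt n)⟩
    · rintro ⟨hxc, hxb⟩
      set ε : ℝ := min (x - c) (b - x) with hε
      have hε0 : 0 < ε := lt_min (by linarith) (by linarith)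
      obtain ⟨n, hn⟩ := exists_nat_one_div_lt (show (0:ℝ) < ε/(b - c) from div_pos hε0 hbc)
      have hlt : d n < ε := by
        have h2 := (div_lt_div_iff₀ (by positivity) hbc).mp hn
        show (b - c)/((n:ℝ)+2) < ε
        rw [div_lt_iff₀ (by positivity)]
        nlinarith [hε0]
      refine ⟨n, ?_, ?_⟩
      · have : ε ≤ x - c := min_le_left _ _
        rw [hsneq n]; linarith
      · have : ε ≤ b - x := min_le_right _ _
        rw [htneq n]; linarith
  have hLHS : Tendsto (fun n => lam a b * ∫ x in Ioc (sn n) (tn n), Real.exp (-x) * (G x)^2)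
      atTop (𝓝 (lam a b * ∫ x in Ioo c b, Real.exp (-x) * (G x)^2)) := by
    apply Tendsto.const_mul
    have := tendsto_setIntegral_of_monotone (fun n => measurableSet_Ioc) hmonoSet
      (by rw [hUnion]; exact hInt1.mono_set hIoosub)
    rwa [hUnion] at this
  have hsn_tendsto : Tendsto sn atTop (𝓝[≠] c) := by
    rw [tendsto_nhdsWithin_iff]
    constructor
    · have : Tendsto (fun n : ℕ => c + d n) atTop (𝓝 (c + 0)) :=
        (tendsto_const_nhds).add (d_tendsto (b - c))
      simpa using this
    · filter_upwards with n
      exact (hs_gt n).ne'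
  have hPsiEq : ∀ n, Psi a b G (sn n) = (phiD a b (sn n) * Real.exp (-(sn n)))
      * ((G (sn n) - G c)/(sn n - c)) * (G (sn n))
      * ((sn n - c)/(phi a b (sn n) - phi a b c)) := by
    intro n
    have h1 : sn n - c ≠ 0 := by have := hs_gt n; intro h; linarith [sub_eq_zero.mp h]
    have h2 : phi a b (sn n) ≠ 0 := (phi_pos hab (hs_gt n) (le_trans (hst n) (ht_lt n).le)).ne'
    have hphic : phi a b c = 0 := phi_x0 hab
    rw [hGx0, hphic]
    unfold Psi hh
    field_simp
    ring
  have hPsiTend : Tendsto (fun n => Psi a b G (sn n)) atTop (𝓝 0) := by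
    have := (psi_tendsto hab hG hGx0).comp hsn_tendsto
    apply this.congr
    intro n
    simp only [Function.comp]
    rw [← hPsiEq n]
  have hRHS : Tendsto (fun n => (∫ x in Ioo c b, Real.exp (-x) * (G' x)^2) + Psi a b G (sn n))
      atTop (𝓝 ((∫ x in Ioo c b, Real.exp (-x) * (G' x)^2) + 0)) :=
    tendsto_const_nhds.add hPsiTend
  have := le_of_tendsto_of_tendsto' hLHS hRHS step
  simpa using this

include hab hG hmeas hInt2 in
lemma core_ineq (hGx0 : G (x0 a b) = 0)
    (hInt1 : IntegrableOn (fun x => Real.exp (-x) * (G x)^2) (Ioo a b) volume) :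
    lam a b * ∫ x in Ioo a b, Real.exp (-x) * (G x)^2 ≤
      ∫ x in Ioo a b, Real.exp (-x) * (G' x)^2 := by
  have hx0 := x0_mem hab
  have hsplitset : Ioo a (x0 a b) ∪ Ico (x0 a b) b = Ioo a b :=
    Ioo_union_Ico_eq_Ioo hx0.1 hx0.2.le
  have hdisj : Disjoint (Ioo a (x0 a b)) (Ico (x0 a b) b) := by
    apply Set.disjoint_left.mpr
    rintro x ⟨_, h2⟩ ⟨h3, _⟩
    exact absurd h3 (not_le.mpr h2)
  have key : ∀ F : ℝ → ℝ, IntegrableOn F (Ioo a b) volume →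
      ∫ x in Ioo a b, F x = (∫ x in Ioo a (x0 a b), F x) + ∫ x in Ioo (x0 a b) b, F x := by
    intro F hF
    rw [← hsplitset, setIntegral_union hdisj measurableSet_Ico
      (hF.mono_set (by rw [← hsplitset]; exact subset_union_left))
      (hF.mono_set (by rw [← hsplitset]; exact subset_union_right)),
      MeasureTheory.integral_Ico_eq_integral_Ioo]
  rw [key _ hInt1, key _ hInt2]
  have h1 := half_left hab hG hmeas hInt2 hGx0 hInt1
  have h2 := half_right hab hG hmeas hInt2 hGx0 hInt1
  linarith
end core

/-- the double exponential measure restricted to `[a,b]` with `0 ≤ a < b`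
has optimal Poincaré constant `(1/4 + (π/(b-a))²)⁻¹`, with the stated saturating function. -/
theorem stmt11 (a b : ℝ) (ha : 0 ≤ a) (hab : a < b) (ν μ : Measure ℝ)
    (hν : ν = MeasureTheory.volume.withDensity fun t =>
      ENNReal.ofReal ((1/2) * Real.exp (-|t|)))
    (hμ : μ = (ν (Set.Icc a b))⁻¹ • ν.restrict (Set.Icc a b))
    (ω C : ℝ) (hω : ω = Real.pi / (b - a)) (hC : C = (1/4 + ω^2)⁻¹)
    (f : ℝ → ℝ)
    (hf : ∀ x, f x = Real.exp (x/2) *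
      (-ω * Real.cos (ω * (x - a)) + (1/2) * Real.sin (ω * (x - a)))) :
    PoincareOn μ (Set.Ioo a b) C ∧
    (∀ C', 0 ≤ C' → PoincareOn μ (Set.Ioo a b) C' → C ≤ C') ∧
    (∫ x, f x ∂μ = 0) ∧
    (∫ x, (f x)^2 ∂μ = C * ∫ x, (deriv f x)^2 ∂μ) := by
  have homega : ω = om a b := by rw [hω]; rfl
  have hfphi : f = phi a b := by
    funext x; rw [hf x, homega]; rfl
  have hCeq : C = (lam a b)⁻¹ := by rw [hC, homega]; rfl
  have hlam := lam_pos hab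
  have hZ := Zpos (a := a) (b := b) hab
  have hba : (0:ℝ) < b - a := by linarith
  haveI hprob : IsProbabilityMeasure μ := mu_prob ha hab hν hμ
  have hderiv_f : ∀ x, HasDerivAt f (phiD a b x) x := fun x => by
    rw [hfphi]; exact hasDerivAt_phi hab x
  have hderiv_eq : deriv f = phiD a b := funext fun x => (hderiv_f x).deriv
  have hbridge : ∀ g : ℝ → ℝ, ∫ x, g x ∂μ
      = (Real.exp (-a) - Real.exp (-b))⁻¹ * ∫ x in a..b, Real.exp (-x) * g x := by
    intro g
    rw [integral_mu ha hab hν hμ g, intervalIntegral.integral_of_le hab.le,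
      MeasureTheory.integral_Ioc_eq_integral_Ioo]
  have hpart3 : ∫ x, f x ∂μ = 0 := by
    rw [hbridge f, hfphi, intg1 hab, mul_zero]
  have hS : ∫ x, (f x)^2 ∂μ
      = (Real.exp (-a) - Real.exp (-b))⁻¹ * (lam a b * (b - a) / 2) := by
    rw [hbridge (fun x => (f x)^2), hfphi, intg2 hab]
  have hD : ∫ x, (deriv f x)^2 ∂μ
      = (Real.exp (-a) - Real.exp (-b))⁻¹ * ((lam a b)^2 * (b - a) / 2) := by
    rw [hbridge (fun x => (deriv f x)^2), hderiv_eq, intg3 hab]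
  have hDpos : 0 < ∫ x, (deriv f x)^2 ∂μ := by
    rw [hD]
    apply mul_pos (inv_pos.mpr hZ)
    positivity
  have hpart4 : ∫ x, (f x)^2 ∂μ = C * ∫ x, (deriv f x)^2 ∂μ := by
    rw [hS, hD, hCeq]
    field_simp
  have hpart1 : PoincareOn μ (Set.Ioo a b) C := by
    intro F F' hd hF2 hF'2
    set c0 := F (x0 a b) with hc0
    have h1 : Var μ F ≤ ∫ x, (F x - c0)^2 ∂μ := var_le μ F c0
    have hFm : AEMeasurable F μ := by
      have hco : ContinuousOn F (Ioo a b) := fun x hx =>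
        (hd x hx).continuousAt.continuousWithinAt
      have h2 := hco.aemeasurable (μ := μ) measurableSet_Ioo
      rwa [Measure.restrict_eq_self_of_ae_mem (mu_ae_Ioo ha hab hν hμ)] at h2
    have hFL2 : MemLp F 2 μ := (memLp_two_iff_integrable_sq hFm.aestronglyMeasurable).mpr hF2
    have hG2 : Integrable (fun x => (F x - c0)^2) μ :=
      (hFL2.sub (memLp_const c0)).integrable_sq
    have hIntG : IntegrableOn (fun x => Real.exp (-x) * (F x - c0)^2) (Ioo a b) volume :=
      integrableOn_weight ha hab hν hμ hG2
    have hIntF' : IntegrableOn (fun x => Real.exp (-x) * (F' x)^2) (Ioo a b) volume :=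
      integrableOn_weight ha hab hν hμ hF'2
    have hmeasF' : AEMeasurable F' (volume.restrict (Ioo a b)) := by
      apply (measurable_deriv F).aemeasurable.congr
      rw [Filter.EventuallyEq, ae_restrict_iff' measurableSet_Ioo]
      exact Filter.Eventually.of_forall fun x hx => (hd x hx).deriv
    have hGd : ∀ x ∈ Ioo a b, HasDerivAt (fun y => F y - c0) (F' x) x := fun x hx =>
      (hd x hx).sub_const c0
    have hGx0 : F (x0 a b) - c0 = 0 := by rw [hc0]; exact sub_self _
    have hcore := core_ineq hab hGd hmeasF' hIntF' hGx0 hIntG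
    rw [integral_mu ha hab hν hμ] at h1
    have h2 : ∫ x, (F' x)^2 ∂μ = (Real.exp (-a) - Real.exp (-b))⁻¹
        * ∫ x in Ioo a b, Real.exp (-x) * (F' x)^2 := integral_mu ha hab hν hμ _
    have hA_le : (∫ x in Ioo a b, Real.exp (-x) * (F x - c0)^2)
        ≤ C * ∫ x in Ioo a b, Real.exp (-x) * (F' x)^2 := by
      rw [hCeq, ← div_eq_inv_mul, le_div_iff₀ hlam]
      nlinarith [hcore]
    calc Var μ F ≤ (Real.exp (-a) - Real.exp (-b))⁻¹
          * ∫ x in Ioo a b, Real.exp (-x) * (F x - c0)^2 := h1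
      _ ≤ (Real.exp (-a) - Real.exp (-b))⁻¹
          * (C * ∫ x in Ioo a b, Real.exp (-x) * (F' x)^2) :=
        mul_le_mul_of_nonneg_left hA_le (inv_nonneg.mpr hZ.le)
      _ = C * ((Real.exp (-a) - Real.exp (-b))⁻¹
          * ∫ x in Ioo a b, Real.exp (-x) * (F' x)^2) := by ring
      _ = C * ∫ x, (F' x)^2 ∂μ := by rw [← h2]
  have hpart2 : ∀ C', 0 ≤ C' → PoincareOn μ (Set.Ioo a b) C' → C ≤ C' := by
    intro C' hC'0 hP
    have hfc : Continuous f := by rw [hfphi]; exact continuous_phi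
    have hdc : Continuous (deriv f) := by rw [hderiv_eq]; exact continuous_phiD
    have hf2i : Integrable (fun x => (f x)^2) μ :=
      integrable_mu_of_continuous ha hab hν hμ (hfc.pow 2)
    have hdf2i : Integrable (fun x => (deriv f x)^2) μ :=
      integrable_mu_of_continuous ha hab hν hμ (hdc.pow 2)
    have hfint : Integrable f μ := integrable_mu_of_continuous ha hab hν hμ hfc
    have happ := hP f (deriv f) (fun x _ => by
      have h3 := hderiv_f x
      rwa [← hderiv_eq] at h3) hf2i hdf2i
    have hvar : Var μ f = ∫ x, (f x)^2 ∂μ := by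
      rw [var_eq μ f hfint hf2i, hpart3]
      ring
    rw [hvar, hpart4] at happ
    exact le_of_mul_le_mul_right happ hDpos
  exact ⟨hpart1, hpart2, hpart3, hpart4⟩
end
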